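/- arXiv:1707.03202 — 4 statements merged into one kernel-verified Lean document; each statement's English description precedes it below -/
import Mathlib

section
/- A problem f is a cylinder (i.e., id × f ≤_sW f) if and only if for all problems g, g ≤_W f implies g ≤_sW f. -/
open scoped Classical

/-! ## Basic notions of Weihrauch complexity -/

/-- The finite prefix of length `m` of a point of Baire space, as a list. -/
def pref (p : ℕ → ℕ) (m : ℕ) : List ℕ := List.ofFn (fun i : Fin m => p i)

/-- Type-2 computability of a partial function on Baire space, defined via monotone
computable word functions producing longer and longer prefixes of the output. -/
def BaireComputable (F : (ℕ → ℕ) →. (ℕ → ℕ)) : Prop :=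
  ∃ ψ : List ℕ → List ℕ, Computable ψ ∧
    (∀ u v : List ℕ, u <+: v → ψ u <+: ψ v) ∧
    ∀ p q, q ∈ F p → ∀ n, ∃ m, (ψ (pref p m))[n]? = some (q n)

/-- The interleaving pairing `⟨p,q⟩` on Baire space. -/
def pairB (p q : ℕ → ℕ) : ℕ → ℕ := fun n => if n % 2 = 0 then p (n / 2) else q (n / 2)

def evenPart (r : ℕ → ℕ) : ℕ → ℕ := fun n => r (2 * n)

def oddPart (r : ℕ → ℕ) : ℕ → ℕ := fun n => r (2 * n + 1)

/-- The `i`-th component of the countable tupling `⟨p₀,p₁,…⟩⟨i,k⟩ = pᵢ(k)`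
(using the Cantor pairing). -/
def proj (r : ℕ → ℕ) (i : ℕ) : ℕ → ℕ := fun k => r (Nat.pair i k)

/-- A represented space: a set `X` together with a surjective partial map
from Baire space onto `X`. -/
structure RepSp (X : Type*) where
  δ : (ℕ → ℕ) →. X
  surj : ∀ x : X, ∃ p, x ∈ δ p

theorem mem_part_mk {α : Type*} {D : Prop} {g : D → α} {a : α} (h : D) (e : g h = a) :
    a ∈ Part.mk D g := Part.mem_mk_iff.mpr ⟨h, e⟩

/-- The identity representation of Baire space. -/
def repBaire : RepSp (ℕ → ℕ) where
  δ := fun p => Part.some p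
  surj := fun p => ⟨p, Part.mem_some p⟩

/-- The standard representation of the natural numbers. -/
def repNat : RepSp ℕ where
  δ := fun p => Part.some (p 0)
  surj := fun n => ⟨fun _ => n, Part.mem_some n⟩

/-- `F` is a realizer of the problem `f :⊆ X ⇉ Y` (a problem is a multi-valued
function `f : X → Set Y`, whose domain is the set of `x` with `f x` nonempty). -/
def Realizes {X Y : Type*} (δX : RepSp X) (δY : RepSp Y)
    (f : X → Set Y) (F : (ℕ → ℕ) →. (ℕ → ℕ)) : Prop :=
  ∀ p x, x ∈ δX.δ p → (f x).Nonempty → ∃ q ∈ F p, ∃ y ∈ δY.δ q, y ∈ f x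

/-- Weihrauch reducibility: `f ≤_W g` iff there are computable `H, K` such that
`p ↦ H⟨p, G(K(p))⟩` realizes `f` whenever `G` realizes `g`. -/
def WRed {X Y Z W : Type*} (δX : RepSp X) (δY : RepSp Y) (δZ : RepSp Z) (δW : RepSp W)
    (f : X → Set Y) (g : Z → Set W) : Prop :=
  ∃ H K : (ℕ → ℕ) →. (ℕ → ℕ), BaireComputable H ∧ BaireComputable K ∧
    ∀ G : (ℕ → ℕ) →. (ℕ → ℕ), Realizes δZ δW g G →
      Realizes δX δY f
        (fun p => (K p).bind fun r => (G r).bind fun q => H (pairB p q))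

/-- Strong Weihrauch reducibility: `f ≤_sW g` iff there are computable `H, K`
such that `H ∘ G ∘ K` realizes `f` whenever `G` realizes `g`. -/
def SWRed {X Y Z W : Type*} (δX : RepSp X) (δY : RepSp Y) (δZ : RepSp Z) (δW : RepSp W)
    (f : X → Set Y) (g : Z → Set W) : Prop :=
  ∃ H K : (ℕ → ℕ) →. (ℕ → ℕ), BaireComputable H ∧ BaireComputable K ∧
    ∀ G : (ℕ → ℕ) →. (ℕ → ℕ), Realizes δZ δW g G →
      Realizes δX δY f (fun p => (K p).bind fun r => (G r).bind fun q => H q)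

/-- Weihrauch equivalence. -/
def WEquiv {X Y Z W : Type*} (δX : RepSp X) (δY : RepSp Y) (δZ : RepSp Z) (δW : RepSp W)
    (f : X → Set Y) (g : Z → Set W) : Prop :=
  WRed δX δY δZ δW f g ∧ WRed δZ δW δX δY g f

/-- Strong Weihrauch equivalence. -/
def SWEquiv {X Y Z W : Type*} (δX : RepSp X) (δY : RepSp Y) (δZ : RepSp Z) (δW : RepSp W)
    (f : X → Set Y) (g : Z → Set W) : Prop :=
  SWRed δX δY δZ δW f g ∧ SWRed δZ δW δX δY g f

/-- The identity problem on Baire space. -/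
def idProblem : (ℕ → ℕ) → Set (ℕ → ℕ) := fun p => {p}

/-! ## Constructions on representations and problems -/

/-- Representation of the product of two represented spaces. -/
def prodRep {X Z : Type*} (δX : RepSp X) (δZ : RepSp Z) : RepSp (X × Z) where
  δ := fun r => (δX.δ (evenPart r)).bind fun x => (δZ.δ (oddPart r)).map fun z => (x, z)
  surj := by
    intro xz
    obtain ⟨p, hp⟩ := δX.surj xz.1
    obtain ⟨q, hq⟩ := δZ.surj xz.2
    have he : evenPart (pairB p q) = p := by
      funext n
      have h1 : (2 * n) % 2 = 0 := by omega
      have h2 : (2 * n) / 2 = n := by omega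
      simp [evenPart, pairB, h1, h2]
    have ho : oddPart (pairB p q) = q := by
      funext n
      have h1 : ¬((2 * n + 1) % 2 = 0) := by omega
      have h2 : (2 * n + 1) / 2 = n := by omega
      simp [oddPart, pairB, h1, h2]
    refine ⟨pairB p q, Part.mem_bind_iff.mpr ⟨xz.1, by rw [he]; exact hp,
      (Part.mem_map_iff _).mpr ⟨xz.2, by rw [ho]; exact hq, rfl⟩⟩⟩

/-- The product `f × g` of two problems. -/
def prodProblem {X Y Z W : Type*} (f : X → Set Y) (g : Z → Set W) :
    X × Z → Set (Y × W) :=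
  fun xz => f xz.1 ×ˢ g xz.2

/-- Representation of the disjoint union of two represented spaces. -/
def sumRep {X Z : Type*} (δX : RepSp X) (δZ : RepSp Z) : RepSp (X ⊕ Z) where
  δ := fun r =>
    if r 0 = 0 then (δX.δ fun n => r (n + 1)).map Sum.inl
    else if r 0 = 1 then (δZ.δ fun n => r (n + 1)).map Sum.inr
    else Part.none
  surj := by
    rintro (x | z)
    · obtain ⟨p, hp⟩ := δX.surj x
      refine ⟨fun n => Nat.casesOn n 0 p, ?_⟩
      show Sum.inl x ∈ (δX.δ p).map Sum.inl
      exact (Part.mem_map_iff _).mpr ⟨x, hp, rfl⟩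
    · obtain ⟨p, hp⟩ := δZ.surj z
      refine ⟨fun n => Nat.casesOn n 1 p, ?_⟩
      show Sum.inr z ∈ (δZ.δ p).map Sum.inr
      exact (Part.mem_map_iff _).mpr ⟨z, hp, rfl⟩

/-- The coproduct `f ⊔ g` of two problems. -/
def coprodProblem {X Y Z W : Type*} (f : X → Set Y) (g : Z → Set W) :
    X ⊕ Z → Set (Y ⊕ W)
  | Sum.inl x => Sum.inl '' f x
  | Sum.inr z => Sum.inr '' g z

/-- The meet `f ⊓ g` of two problems. -/
def meetProblem {X Y Z W : Type*} (f : X → Set Y) (g : Z → Set W) :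
    X × Z → Set (Y ⊕ W) :=
  fun xz => Sum.inl '' f xz.1 ∪ Sum.inr '' g xz.2

/-- Representation of the space of sequences `X^ℕ` via the countable tupling. -/
noncomputable def seqRep {X : Type*} (δX : RepSp X) : RepSp (ℕ → X) where
  δ := fun r => Part.mk (∀ i : ℕ, ∃ x, x ∈ δX.δ (proj r i))
    (fun h i => Classical.choose (h i))
  surj := by
    intro x
    choose p hp using fun i => δX.surj (x i)
    refine ⟨fun m => p (Nat.unpair m).1 (Nat.unpair m).2, ?_⟩
    have hproj : ∀ i, proj (fun m => p (Nat.unpair m).1 (Nat.unpair m).2) i = p i := by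
      intro i; funext k; simp [proj]
    have hdom : ∀ i : ℕ, ∃ y, y ∈ δX.δ (proj (fun m => p (Nat.unpair m).1 (Nat.unpair m).2) i) :=
      fun i => ⟨x i, by rw [hproj i]; exact hp i⟩
    refine mem_part_mk hdom ?_
    funext i
    exact Part.mem_unique (Classical.choose_spec (hdom i)) (by rw [hproj i]; exact hp i)

/-- The parallelization `f̂` of a problem. -/
def parallelProblem {X Y : Type*} (f : X → Set Y) : (ℕ → X) → Set (ℕ → Y) :=
  fun x => {y | ∀ i, y i ∈ f (x i)}

/-- Representation of the finite power `Xⁿ` via the countable tupling. -/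
noncomputable def finProdRep (n : ℕ) {X : Type*} (δX : RepSp X) : RepSp (Fin n → X) where
  δ := fun r => Part.mk (∀ i : Fin n, ∃ x, x ∈ δX.δ (proj r i))
    (fun h i => Classical.choose (h i))
  surj := by
    intro x
    choose p hp using fun i => δX.surj (x i)
    classical
    refine ⟨fun m => if h : (Nat.unpair m).1 < n then p ⟨_, h⟩ (Nat.unpair m).2 else 0, ?_⟩
    have hproj : ∀ i : Fin n,
        proj (fun m => if h : (Nat.unpair m).1 < n then p ⟨_, h⟩ (Nat.unpair m).2 else 0) i
          = p i := by
      intro i; funext k; simp [proj, i.isLt]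
    have hdom : ∀ i : Fin n, ∃ y, y ∈ δX.δ
        (proj (fun m => if h : (Nat.unpair m).1 < n then p ⟨_, h⟩ (Nat.unpair m).2 else 0) i) :=
      fun i => ⟨x i, by rw [hproj i]; exact hp i⟩
    refine mem_part_mk hdom ?_
    funext i
    exact Part.mem_unique (Classical.choose_spec (hdom i)) (by rw [hproj i]; exact hp i)

/-- The `n`-fold product `fⁿ` of a problem with itself. -/
def finProdProblem (n : ℕ) {X Y : Type*} (f : X → Set Y) :
    (Fin n → X) → Set (Fin n → Y) :=
  fun x => {y | ∀ i, y i ∈ f (x i)}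

/-- Representation of the space `X*` of words over `X`. -/
noncomputable def starRep {X : Type*} (δX : RepSp X) : RepSp (Σ n : ℕ, Fin n → X) where
  δ := fun r => Part.mk (∀ i : Fin (r 0), ∃ x, x ∈ δX.δ (proj (fun m => r (m + 1)) i))
    (fun h => ⟨r 0, fun i => Classical.choose (h i)⟩)
  surj := by
    rintro ⟨n, x⟩
    choose p hp using fun i => δX.surj (x i)
    classical
    have hproj : ∀ i : Fin n,
        proj (fun m' => if h : (Nat.unpair m').1 < n then p ⟨_, h⟩ (Nat.unpair m').2 else 0) i
          = p i := by
      intro i; funext k; simp [proj, i.isLt]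
    have hdom : ∀ i : Fin n, ∃ y, y ∈ δX.δ
        (proj (fun m' => if h : (Nat.unpair m').1 < n then p ⟨_, h⟩ (Nat.unpair m').2 else 0) i) :=
      fun i => ⟨x i, by rw [hproj i]; exact hp i⟩
    refine ⟨fun m => Nat.casesOn m n
      (fun m' => if h : (Nat.unpair m').1 < n then p ⟨_, h⟩ (Nat.unpair m').2 else 0),
      Part.mem_mk_iff.mpr ⟨hdom, ?_⟩⟩
    have hx : (fun i : Fin n => Classical.choose (hdom i)) = x := funext fun i =>
      Part.mem_unique (Classical.choose_spec (hdom i)) (by rw [hproj i]; exact hp i)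
    exact congrArg (Sigma.mk n) hx

/-- The finite parallelization `f*` of a problem. -/
def starProblem {X Y : Type*} (f : X → Set Y) :
    (Σ n : ℕ, Fin n → X) → Set (Σ n : ℕ, Fin n → Y) :=
  fun x => {y | ∃ e : x.1 = y.1, ∀ i : Fin x.1, y.2 (Fin.cast e i) ∈ f (x.2 i)}

/-- Representation of a countable disjoint union of represented spaces. -/
def csumRep {Z : ℕ → Type*} (δZ : ∀ i, RepSp (Z i)) : RepSp (Σ i, Z i) where
  δ := fun r => ((δZ (r 0)).δ (fun n => r (n + 1))).map fun z => ⟨r 0, z⟩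
  surj := by
    rintro ⟨i, z⟩
    obtain ⟨p, hp⟩ := (δZ i).surj z
    exact ⟨fun n => Nat.casesOn n i p, (Part.mem_map_iff _).mpr ⟨z, hp, rfl⟩⟩

/-- The countable coproduct `⊔ᵢ gᵢ` of a sequence of problems. -/
def csumProblem {Z W : ℕ → Type*} (g : ∀ i, Z i → Set (W i)) :
    (Σ i, Z i) → Set (Σ i, W i) :=
  fun x => Sigma.mk x.1 '' g x.1 x.2

/-! ## Limits and jumps -/

/-- The limit map on Baire space, as a (single-valued) problem:
`lim⟨p₀,p₁,…⟩` is the pointwise limit of the sequence `(pₙ)ₙ`. -/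
def limProblem : (ℕ → ℕ) → Set (ℕ → ℕ) :=
  fun r => {q | ∀ n, ∃ N, ∀ m, N ≤ m → proj r m n = q n}

/-- The limit map on Baire space as a partial (single-valued) function. -/
noncomputable def limP : (ℕ → ℕ) →. (ℕ → ℕ) :=
  fun r => Part.mk (∀ n, ∃ N, ∀ m, N ≤ m → proj r m n = proj r N n)
    (fun h n => proj r (Classical.choose (h n)) n)

/-- The jump `(X′, δ′)` of a represented space: `δ′ := δ ∘ lim`. -/
noncomputable def jumpRep {X : Type*} (δ : RepSp X) : RepSp X where
  δ := fun p => (limP p).bind δ.δ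
  surj := by
    intro x
    obtain ⟨p, hp⟩ := δ.surj x
    refine ⟨fun m => p (Nat.unpair m).2, Part.mem_bind_iff.mpr ⟨p, ?_, hp⟩⟩
    have hproj : ∀ m, proj (fun m => p (Nat.unpair m).2) m = p := by
      intro m; funext k; simp [proj]
    have hdom : ∀ n, ∃ N, ∀ m, N ≤ m →
        proj (fun m => p (Nat.unpair m).2) m n = proj (fun m => p (Nat.unpair m).2) N n :=
      fun n => ⟨0, fun m _ => by rw [hproj m, hproj 0]⟩
    refine mem_part_mk hdom ?_
    funext n
    rw [hproj]

/-! ## Choice problems -/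

/-- The representation of subsets of `ℕ` by enumerations of their complements:
`p` is a name of `A` iff `p` enumerates (via `p m = n + 1`) exactly the `n ∉ A`. -/
def enumNegRep : RepSp (Set ℕ) where
  δ := fun p => Part.some {n | ∀ m, p m ≠ n + 1}
  surj := by
    intro S
    by_cases h : Sᶜ.Nonempty
    · obtain ⟨f, hf⟩ := (Set.to_countable Sᶜ).exists_eq_range h
      refine ⟨fun m => f m + 1, Part.mem_some_iff.mpr ?_⟩
      ext n
      simp only [Set.mem_setOf_eq]
      constructor
      · intro hn m hm
        have hfm : f m ∈ Sᶜ := by rw [hf]; exact ⟨m, rfl⟩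
        have hfmn : f m = n := by omega
        rw [hfmn] at hfm
        exact hfm hn
      · intro hn
        by_contra hS
        have hmem : n ∈ Sᶜ := hS
        rw [hf] at hmem
        obtain ⟨m, hm⟩ := hmem
        exact hn m (by omega)
    · refine ⟨fun _ => 0, Part.mem_some_iff.mpr ?_⟩
      have hS : S = Set.univ := by
        rw [← compl_compl S, Set.not_nonempty_iff_eq_empty.mp h, Set.compl_empty]
      rw [hS]
      ext n
      simp

/-- Choice on the natural numbers: given (a name of) a nonempty set `A ⊆ ℕ`,
find an element of `A`. -/
def CNat : Set ℕ → Set ℕ := fun A => A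

/-- Choice on the finite set `{0, …, k-1}`. -/
def CFin (k : ℕ) : Set ℕ → Set ℕ := fun A => {n | n ∈ A ∧ A ⊆ Set.Iio k}

/-- The limited principle of omniscience as a problem. -/
noncomputable def LPOProblem : (ℕ → ℕ) → Set ℕ :=
  fun p => {if ∃ k, p k = 0 then 1 else 0}


/-- Restriction of a problem on Baire space to a set `A`. -/
def restrictProblem (F : (ℕ → ℕ) → Set (ℕ → ℕ)) (A : Set (ℕ → ℕ)) :
    (ℕ → ℕ) → Set (ℕ → ℕ) :=
  fun p => {q | q ∈ F p ∧ p ∈ A}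

/-- A problem is a fractal if it has a representative on Baire space all of whose
restrictions to clopen sets meeting its domain are Weihrauch equivalent to it. -/
def Fractal {X Y : Type*} (δX : RepSp X) (δY : RepSp Y) (f : X → Set Y) : Prop :=
  ∃ F : (ℕ → ℕ) → Set (ℕ → ℕ),
    WEquiv repBaire repBaire δX δY F f ∧
    ∀ A : Set (ℕ → ℕ), IsClopen A → (A ∩ {p | (F p).Nonempty}).Nonempty →
      WEquiv repBaire repBaire repBaire repBaire (restrictProblem F A) F

/-- A problem `f` is densely realized if for every name `p` of an admissible instance
the set of names of solutions is dense in the domain of the output representation. -/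
def DenselyRealized {X Y : Type*} (δX : RepSp X) (δY : RepSp Y) (f : X → Set Y) : Prop :=
  ∀ p, ∀ x ∈ δX.δ p, (f x).Nonempty →
    {q : ℕ → ℕ | (δY.δ q).Dom} ⊆ closure {q : ℕ → ℕ | ∃ y ∈ δY.δ q, y ∈ f x}

/-- Turing reducibility on Baire space: `a` is computable from `b`. -/
def TRed (a b : ℕ → ℕ) : Prop := ∃ F, BaireComputable F ∧ a ∈ F b

/-- The two-point space `{p, q}` represented by the identity. -/
def pqRep (p q : ℕ → ℕ) : RepSp {r : ℕ → ℕ // r = p ∨ r = q} where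
  δ := fun r => Part.mk (r = p ∨ r = q) (fun h => ⟨r, h⟩)
  surj := fun x => ⟨x.1, Part.mem_mk_iff.mpr ⟨x.2, rfl⟩⟩

/-- The problem `m_A` associated with a set `A ⊆ ℕ`. -/
noncomputable def mProblem (p q : ℕ → ℕ) (A : Set ℕ) :
    ℕ → Set {r : ℕ → ℕ // r = p ∨ r = q} :=
  fun n => {y | y.1 = if n ∈ A then p else q}

/-- The join `A ⊕ B` of two sets of natural numbers. -/
def mJoin (A B : Set ℕ) : Set ℕ :=
  {k | (k % 2 = 0 ∧ k / 2 ∈ A) ∨ (k % 2 = 1 ∧ k / 2 ∈ B)}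

/-- The cardinality `#f` of a problem: the supremum of the cardinalities of sets
`M ⊆ dom f` whose images under `f` are pairwise disjoint. -/
noncomputable def problemCard {X Y : Type} (f : X → Set Y) : Cardinal :=
  sSup {c | ∃ M : Set X, (∀ x ∈ M, (f x).Nonempty) ∧ M.PairwiseDisjoint f ∧
    c = Cardinal.mk M}

/-- Computability of a problem: it has a computable realizer. -/
def ComputableProblem {X Y : Type*} (δX : RepSp X) (δY : RepSp Y) (f : X → Set Y) : Prop :=
  ∃ F, BaireComputable F ∧ Realizes δX δY f F

/-- The minimum function on Baire space. -/
def minProblem : (ℕ → ℕ) → Set ℕ :=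
  fun p => {n | n ∈ Set.range p ∧ ∀ m, n ≤ p m}

/-- The complementary minimum function `minᶜ`. -/
def mincProblem : (ℕ → ℕ) → Set ℕ :=
  fun p => {n | (∀ m, p m ≠ n) ∧ ∀ j, j < n → ∃ m, p m = j}

/-- The maximum function on Baire space (defined on bounded sequences). -/
def maxProblem : (ℕ → ℕ) → Set ℕ :=
  fun p => {n | n ∈ Set.range p ∧ ∀ m, p m ≤ n}

namespace WHelp

lemma lt_of_getElem?_eq_some {u : List ℕ} {i a : ℕ} (h : u[i]? = some a) : i < u.length :=
  (List.getElem?_eq_some_iff.mp h).1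

lemma getElem?_of_prefix {u v : List ℕ} (h : u <+: v) {i a : ℕ}
    (ha : u[i]? = some a) : v[i]? = some a := by
  obtain ⟨t, rfl⟩ := h
  rw [List.getElem?_append_left (lt_of_getElem?_eq_some ha)]
  exact ha

lemma prefix_of_getElem? {u w : List ℕ} (hlen : u.length ≤ w.length)
    (h : ∀ i, i < u.length → w[i]? = u[i]?) : u <+: w := by
  have : u = w.take u.length := by
    apply List.ext_getElem (by simp; omega)
    intro n h1 h2
    have hw := h n h1
    have : w[n]? = some u[n] := by rw [hw, List.getElem?_eq_some_iff]; exact ⟨h1, rfl⟩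
    have hn : n < w.length := lt_of_getElem?_eq_some this
    have := List.getElem?_eq_some_iff.mp this
    obtain ⟨_, e⟩ := this
    rw [List.getElem_take]
    exact e.symm
  rw [this]
  exact List.take_prefix _ _

lemma length_pref (p : ℕ → ℕ) (m : ℕ) : (pref p m).length = m := by simp [pref]

lemma getElem?_pref (p : ℕ → ℕ) {i m : ℕ} (h : i < m) : (pref p m)[i]? = some (p i) := by
  simp [pref, List.getElem?_ofFn, List.ofFnNthVal, h]

lemma pref_prefix (p : ℕ → ℕ) {m m' : ℕ} (h : m ≤ m') : pref p m <+: pref p m' := by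
  apply prefix_of_getElem? (by simp [length_pref]; omega)
  intro i hi
  rw [length_pref] at hi
  rw [getElem?_pref p hi, getElem?_pref p (lt_of_lt_of_le hi h)]

lemma getD_of_prefix {u v : List ℕ} (h : u <+: v) {j : ℕ} (hj : j < u.length) :
    v.getD j 0 = u.getD j 0 := by
  obtain ⟨a, ha⟩ : ∃ a, u[j]? = some a := by
    exact ⟨_, List.getElem?_eq_getElem hj⟩
  rw [List.getD_eq_getElem?_getD, List.getD_eq_getElem?_getD, ha, getElem?_of_prefix h ha]

lemma approx_all {F : (ℕ→ℕ) →. (ℕ→ℕ)} {ψ : List ℕ → List ℕ}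
    (mono : ∀ u v, u <+: v → ψ u <+: ψ v)
    (corr : ∀ p q, q ∈ F p → ∀ n, ∃ m, (ψ (pref p m))[n]? = some (q n))
    {p q} (hq : q ∈ F p) (n : ℕ) :
    ∃ m, n < m ∧ ∀ j ≤ n, (ψ (pref p m))[j]? = some (q j) := by
  induction n with
  | zero =>
    obtain ⟨m, hm⟩ := corr p q hq 0
    exact ⟨max m 1, by omega, fun j hj => by
      have : j = 0 := by omega
      subst this
      exact getElem?_of_prefix (mono _ _ (pref_prefix p (le_max_left _ _))) hm⟩
  | succ n ih =>
    obtain ⟨m₀, hm0, hall⟩ := ih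
    obtain ⟨m₁, hm1⟩ := corr p q hq (n+1)
    refine ⟨max m₀ (max m₁ (n+2)), by omega, fun j hj => ?_⟩
    rcases le_or_gt j n with h | h
    · exact getElem?_of_prefix (mono _ _ (pref_prefix p (le_max_left _ _))) (hall j h)
    · have : j = n + 1 := by omega
      subst this
      exact getElem?_of_prefix
        (mono _ _ (pref_prefix p ((le_max_left _ _).trans (le_max_right _ _)))) hm1

lemma BC_comp {F G : (ℕ→ℕ) →. (ℕ→ℕ)} (hF : BaireComputable F) (hG : BaireComputable G) :
    BaireComputable (fun p => (F p).bind G) := by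
  obtain ⟨ψF, cF, mF, aF⟩ := hF
  obtain ⟨ψG, cG, mG, aG⟩ := hG
  refine ⟨fun u => ψG (ψF u), cG.comp cF, fun u v h => mG _ _ (mF _ _ h), ?_⟩
  intro p q hq n
  obtain ⟨r, hr, hqr⟩ := Part.mem_bind_iff.mp hq
  obtain ⟨m₁, hm₁⟩ := aG r q hqr n
  obtain ⟨m, _, hall⟩ := approx_all mF aF hr m₁
  have hpre : pref r m₁ <+: ψF (pref p m) := by
    apply prefix_of_getElem?
    · have := lt_of_getElem?_eq_some (hall m₁ le_rfl)
      rw [length_pref]; omega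
    · intro i hi
      rw [length_pref] at hi
      rw [getElem?_pref r hi]
      exact hall i (by omega)
  exact ⟨m, getElem?_of_prefix (mG _ _ hpre) hm₁⟩

lemma BC_congr {F G : (ℕ→ℕ) →. (ℕ→ℕ)} (h : ∀ p, F p = G p) (hF : BaireComputable F) :
    BaireComputable G := by
  have : F = G := funext h
  exact this ▸ hF

lemma BC_precomp {h k : ℕ → ℕ} (hh : Primrec h) (hk : Primrec k)
    (monok : Monotone k) (bound : ∀ L i, i < k L → h i < L)
    (unb : ∀ n, ∃ L, n < k L) :
    BaireComputable (fun p => Part.some (fun n => p (h n))) := by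
  refine ⟨fun u => (List.range (k u.length)).map (fun i => u.getD (h i) 0), ?_, ?_, ?_⟩
  · apply Primrec.to_comp
    have h1 : Primrec (fun u : List ℕ => List.range (k u.length)) :=
      Primrec.list_range.comp (hk.comp Primrec.list_length)
    have h2 : Primrec₂ (fun (u : List ℕ) (i : ℕ) => (u[h i]?).getD 0) :=
      Primrec.option_getD.comp
        (Primrec.list_getElem?.comp Primrec.fst (hh.comp Primrec.snd))
        (Primrec.const 0)
    exact (Primrec.list_map h1 h2).of_eq
      (fun u => by simp [List.getD_eq_getElem?_getD])
  · intro u v huv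
    apply prefix_of_getElem?
    · simp only [List.length_map, List.length_range]
      exact monok huv.length_le
    · intro i hi
      simp only [List.length_map, List.length_range] at hi
      rw [List.getElem?_map, List.getElem?_map, List.getElem?_range hi,
        List.getElem?_range (lt_of_lt_of_le hi (monok huv.length_le))]
      show some (v.getD (h i) 0) = some (u.getD (h i) 0)
      rw [getD_of_prefix huv (bound _ _ hi)]
  · intro p q hq n
    rw [Part.mem_some_iff] at hq
    subst hq
    obtain ⟨L, hL⟩ := unb n
    refine ⟨L, ?_⟩
    rw [List.getElem?_map, List.getElem?_range (by first | rwa [length_pref] | exact hL)]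
    show some ((pref p L).getD (h n) 0) = _
    rw [List.getD_eq_getElem?_getD,
      getElem?_pref p (bound _ _ (by first | rwa [length_pref] | exact hL))]
    rfl

def itl (uv : List ℕ × List ℕ) : List ℕ :=
  (List.range (2 * min uv.1.length uv.2.length)).map
    (fun n => if n % 2 = 0 then uv.1.getD (n/2) 0 else uv.2.getD (n/2) 0)

lemma primrec_itl : Primrec itl := by
  have h1 : Primrec (fun uv : List ℕ × List ℕ =>
      List.range (2 * min uv.1.length uv.2.length)) :=
    Primrec.list_range.comp (Primrec.nat_mul.comp (Primrec.const 2)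
      (Primrec.nat_min.comp (Primrec.list_length.comp Primrec.fst)
        (Primrec.list_length.comp Primrec.snd)))
  have h2 : Primrec₂ (fun (uv : List ℕ × List ℕ) (n : ℕ) =>
      if n % 2 = 0 then (uv.1[n/2]?).getD 0 else (uv.2[n/2]?).getD 0) := by
    have hmod : Primrec (fun x : (List ℕ × List ℕ) × ℕ => x.2 % 2) :=
      Primrec.nat_mod.comp Primrec.snd (Primrec.const 2)
    have hdiv : Primrec (fun x : (List ℕ × List ℕ) × ℕ => x.2 / 2) :=
      Primrec.nat_div.comp Primrec.snd (Primrec.const 2)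
    exact Primrec.ite (Primrec.eq.comp hmod (Primrec.const 0))
      (Primrec.option_getD.comp
        (Primrec.list_getElem?.comp (Primrec.fst.comp Primrec.fst) hdiv) (Primrec.const 0))
      (Primrec.option_getD.comp
        (Primrec.list_getElem?.comp (Primrec.snd.comp Primrec.fst) hdiv) (Primrec.const 0))
  exact (Primrec.list_map h1 h2).of_eq
    (fun uv => by simp [itl, List.getD_eq_getElem?_getD])

lemma itl_getElem? {u w : List ℕ} {n : ℕ} (hn : n < 2 * min u.length w.length) :
    (itl (u, w))[n]? = some (if n % 2 = 0 then u.getD (n/2) 0 else w.getD (n/2) 0) := by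
  rw [itl, List.getElem?_map, List.getElem?_range hn]
  rfl

lemma BC_pair {F : (ℕ→ℕ) →. (ℕ→ℕ)} (hF : BaireComputable F) :
    BaireComputable (fun p => (F p).map (pairB p)) := by
  obtain ⟨ψ, cψ, mψ, aψ⟩ := hF
  refine ⟨fun u => itl (u, ψ u), ?_, ?_, ?_⟩
  · exact primrec_itl.to_comp.comp (Computable.id.pair cψ)
  · intro u v huv
    have hψ := mψ _ _ huv
    apply prefix_of_getElem?
    · simp only [itl, List.length_map, List.length_range]
      have := huv.length_le
      have := hψ.length_le
      omega
    · intro i hi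
      simp only [itl, List.length_map, List.length_range] at hi
      rw [itl_getElem? hi, itl_getElem? (by have := huv.length_le; have := hψ.length_le; omega)]
      have h1 : i / 2 < u.length := by omega
      have h2 : i / 2 < (ψ u).length := by omega
      rw [getD_of_prefix huv h1, getD_of_prefix hψ h2]
  · intro p q hq n
    obtain ⟨r, hr, hqr⟩ := Part.mem_map_iff _ |>.mp hq
    subst hqr
    obtain ⟨m, hm, hall⟩ := approx_all mψ aψ hr n
    refine ⟨m, ?_⟩
    have hlen : n < (ψ (pref p m)).length := lt_of_getElem?_eq_some (hall n le_rfl)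
    have hmin : n < 2 * min (pref p m).length (ψ (pref p m)).length := by
      rw [length_pref]; omega
    rw [itl_getElem? hmin]
    have hd2 : n / 2 ≤ n := Nat.div_le_self n 2
    have hkey : (if n % 2 = 0 then (pref p m).getD (n/2) 0 else (ψ (pref p m)).getD (n/2) 0)
        = pairB p r n := by
      unfold pairB
      by_cases hpar : n % 2 = 0
      · rw [if_pos hpar, if_pos hpar, List.getD_eq_getElem?_getD, getElem?_pref p (by omega)]
        rfl
      · rw [if_neg hpar, if_neg hpar, List.getD_eq_getElem?_getD, hall (n/2) hd2]
        rfl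
    rw [hkey]

lemma evenPart_pairB (p q : ℕ → ℕ) : evenPart (pairB p q) = p := by
  funext n
  unfold evenPart pairB
  rw [if_pos (by omega)]
  congr 1
  omega

lemma oddPart_pairB (p q : ℕ → ℕ) : oddPart (pairB p q) = q := by
  funext n
  unfold oddPart pairB
  rw [if_neg (by omega)]
  congr 1
  omega

lemma pairB_even_odd (t : ℕ → ℕ) : pairB (evenPart t) (oddPart t) = t := by
  funext n
  unfold pairB evenPart oddPart
  by_cases h : n % 2 = 0
  · rw [if_pos h]
    congr 1
    omega
  · rw [if_neg h]
    congr 1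
    omega

lemma BC_odd : BaireComputable (fun t => Part.some (oddPart t)) := by
  have hh : Primrec (fun n : ℕ => 2 * n + 1) :=
    Primrec.nat_add.comp (Primrec.nat_mul.comp (Primrec.const 2) Primrec.id) (Primrec.const 1)
  have hk : Primrec (fun L : ℕ => L / 2) := Primrec.nat_div.comp Primrec.id (Primrec.const 2)
  refine BC_congr (fun p => ?_)
    (BC_precomp hh hk (fun a b hab => Nat.div_le_div_right hab)
      (fun L i hi => by omega) (fun n => ⟨2 * n + 2, by omega⟩))
  rfl

lemma BC_H0 : BaireComputable
    (fun t => Part.some (pairB (evenPart (evenPart t)) (oddPart t))) := by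
  have hh : Primrec (fun n : ℕ => if n % 2 = 0 then 2 * n else n) :=
    Primrec.ite (Primrec.eq.comp (Primrec.nat_mod.comp Primrec.id (Primrec.const 2))
        (Primrec.const 0))
      (Primrec.nat_mul.comp (Primrec.const 2) Primrec.id) Primrec.id
  have hk : Primrec (fun L : ℕ => L / 4) := Primrec.nat_div.comp Primrec.id (Primrec.const 4)
  refine BC_congr (fun t => ?_)
    (BC_precomp hh hk (fun a b hab => Nat.div_le_div_right hab)
      (fun L i hi => by split <;> omega) (fun n => ⟨4 * n + 4, by omega⟩))
  congr 1
  funext n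
  unfold pairB evenPart oddPart
  by_cases h : n % 2 = 0
  · rw [if_pos h, if_pos h]
    congr 1
    omega
  · rw [if_neg h, if_neg h]
    congr 1
    omega

lemma Realizes_congr {X Y : Type*} {δX : RepSp X} {δY : RepSp Y} {f : X → Set Y}
    {F G : (ℕ → ℕ) →. (ℕ → ℕ)} (h : ∀ p, F p = G p)
    (hF : Realizes δX δY f F) : Realizes δX δY f G := by
  have : F = G := funext h
  exact this ▸ hF

end WHelp


/-- `f` is a cylinder iff `≤_W`-reducibility to `f` coincides with
`≤_sW`-reducibility to `f`. -/
theorem cylinder_iff (X Y : Type) (δX : RepSp X) (δY : RepSp Y) (f : X → Set Y) :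
    SWRed (prodRep repBaire δX) (prodRep repBaire δY) δX δY
        (prodProblem idProblem f) f ↔
    ∀ (Z W : Type) (δZ : RepSp Z) (δW : RepSp W) (g : Z → Set W),
      WRed δZ δW δX δY g f ↔ SWRed δZ δW δX δY g f := by
  open WHelp in
  constructor
  · -- hard direction: cylinder implies W = sW reducibility to f
    intro hCyl Z W δZ δW g
    constructor
    · intro hW
      obtain ⟨H, K, cH, cK, hcyl⟩ := hCyl
      obtain ⟨H', K', cH', cK', hred⟩ := hW
      refine ⟨fun s => (H s).bind H', fun p => ((K' p).map (pairB p)).bind K,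
        BC_comp cH cH', BC_comp (BC_pair cK') cK, ?_⟩
      intro G hG p z hz hne
      have hGcreal : Realizes (prodRep repBaire δX) (prodRep repBaire δY)
          (prodProblem idProblem f) (fun r => (K r).bind fun a => (G a).bind H) := hcyl G hG
      -- the auxiliary realizer of f obtained by feeding `p` along
      have hG'real : Realizes δX δY f
          (fun r => (((K (pairB p r)).bind fun a => (G a).bind H).bind
            fun t => Part.mk (evenPart t = p) (fun _ => oddPart t))) := by
        intro r x hxr hfx
        have hpair : ((p, x) : (ℕ → ℕ) × X) ∈ (prodRep repBaire δX).δ (pairB p r) := by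
          refine Part.mem_bind_iff.mpr ⟨p, ?_, (Part.mem_map_iff _).mpr ⟨x, ?_, rfl⟩⟩
          · show p ∈ Part.some (evenPart (pairB p r))
            rw [evenPart_pairB]
            exact Part.mem_some p
          · rw [oddPart_pairB]
            exact hxr
        have hpne : (prodProblem idProblem f (p, x)).Nonempty := by
          obtain ⟨y, hy⟩ := hfx
          exact ⟨(p, y), Set.mem_prod.mpr ⟨rfl, hy⟩⟩
        obtain ⟨t, htG, py, hpy, hpyf⟩ := hGcreal (pairB p r) (p, x) hpair hpne
        obtain ⟨e, he, hmap⟩ := Part.mem_bind_iff.mp hpy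
        obtain ⟨y', hy', hyy⟩ := (Part.mem_map_iff _).mp hmap
        have hee : e = evenPart t := Part.mem_some_iff.mp he
        rw [← hyy] at hpyf
        have hep : e = p := hpyf.1
        refine ⟨oddPart t, ?_, y', hy', hpyf.2⟩
        exact Part.mem_bind_iff.mpr ⟨t, htG, mem_part_mk (by rw [← hee, hep]) rfl⟩
      obtain ⟨q, hq, w, hw, hwg⟩ := hred _ hG'real p z hz hne
      obtain ⟨r, hr, hq2⟩ := Part.mem_bind_iff.mp hq
      obtain ⟨q₀, hq0, hq3⟩ := Part.mem_bind_iff.mp hq2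
      obtain ⟨t, htGc, hq0'⟩ := Part.mem_bind_iff.mp hq0
      obtain ⟨hevt, hq0e⟩ := Part.mem_mk_iff.mp hq0'
      obtain ⟨a, haK, hs⟩ := Part.mem_bind_iff.mp htGc
      obtain ⟨s, hsG, hts⟩ := Part.mem_bind_iff.mp hs
      have hpt : pairB p q₀ = t := by
        rw [← hevt, ← hq0e]
        exact pairB_even_odd t
      refine ⟨q, ?_, w, hw, hwg⟩
      refine Part.mem_bind_iff.mpr
        ⟨a, Part.mem_bind_iff.mpr ⟨pairB p r, (Part.mem_map_iff _).mpr ⟨r, hr, rfl⟩, haK⟩,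
          Part.mem_bind_iff.mpr ⟨s, hsG, Part.mem_bind_iff.mpr ⟨t, hts, ?_⟩⟩⟩
      rwa [hpt] at hq3
    · -- strong reducibility always implies reducibility
      intro hSW
      obtain ⟨H, K, cH, cK, hr⟩ := hSW
      refine ⟨fun t => (Part.some (oddPart t)).bind H, K, BC_comp BC_odd cH, cK, ?_⟩
      intro G hG
      refine Realizes_congr (fun p => ?_) (hr G hG)
      apply congrArg
      funext r
      apply congrArg
      funext q
      show H q = (Part.some (oddPart (pairB p q))).bind H
      rw [oddPart_pairB]
      exact (Part.bind_some _ _).symm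
  · -- easy direction: apply the equivalence to `id × f`
    intro hAll
    apply (hAll _ _ _ _ _).mp
    refine ⟨fun t => Part.some (pairB (evenPart (evenPart t)) (oddPart t)),
      fun r => Part.some (oddPart r), BC_H0, BC_odd, ?_⟩
    intro G hG p xz hxz hne
    obtain ⟨x, hx, hmap⟩ := Part.mem_bind_iff.mp hxz
    obtain ⟨z, hz, hzz⟩ := (Part.mem_map_iff _).mp hmap
    have hxe : x = evenPart p := Part.mem_some_iff.mp hx
    subst hzz
    have hfz : (f z).Nonempty := by
      obtain ⟨⟨a, b⟩, hab⟩ := hne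
      exact ⟨b, hab.2⟩
    obtain ⟨q, hqG, y, hy, hyf⟩ := hG (oddPart p) z hz hfz
    refine ⟨pairB x q, ?_, (x, y), ?_, Set.mem_prod.mpr ⟨rfl, hyf⟩⟩
    · refine Part.mem_bind_iff.mpr ⟨oddPart p, Part.mem_some _,
        Part.mem_bind_iff.mpr ⟨q, hqG, ?_⟩⟩
      show pairB x q ∈ Part.some (pairB (evenPart (evenPart (pairB p q))) (oddPart (pairB p q)))
      rw [evenPart_pairB, oddPart_pairB, hxe]
      exact Part.mem_some _
    · refine Part.mem_bind_iff.mpr ⟨x, ?_, (Part.mem_map_iff _).mpr ⟨y, ?_, rfl⟩⟩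
      · show x ∈ Part.some (evenPart (pairB x q))
        rw [evenPart_pairB]
        exact Part.mem_some x
      · rw [oddPart_pairB]
        exact hy
end

section
/- Parallelization is a closure operator with respect to Weihrauch reducibility: f ≤_W f̂, (f̂)̂ ≤_W f̂, and f ≤_W g implies f̂ ≤_W ĝ. -/
open scoped Classical

namespace ParAux

/-- length of the maximal initial segment of `[0,k)` on which `p` holds -/
def cnt (p : ℕ → Bool) : ℕ → ℕ
  | 0 => 0
  | k + 1 => if cnt p k = k ∧ p k = true then k + 1 else cnt p k

lemma cnt_le (p : ℕ → Bool) : ∀ k, cnt p k ≤ k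
  | 0 => le_rfl
  | k + 1 => by
    simp only [cnt]
    split_ifs
    · exact le_rfl
    · exact (cnt_le p k).trans (Nat.le_succ k)

lemma cnt_mono (p : ℕ → Bool) : Monotone (cnt p) := by
  apply monotone_nat_of_le_succ
  intro k
  simp only [cnt]
  split_ifs
  · exact (cnt_le p k).trans (Nat.le_succ k)
  · exact le_rfl

lemma cnt_true (p : ℕ → Bool) : ∀ k n, n < cnt p k → p n = true := by
  intro k
  induction k with
  | zero => intro n h; simp [cnt] at h
  | succ k ih =>
    intro n h
    simp only [cnt] at h
    split_ifs at h with hb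
    · rcases Nat.lt_succ_iff_lt_or_eq.mp h with h' | h'
      · exact ih n (by rw [hb.1]; exact h')
      · subst h'; exact hb.2
    · exact ih n h

lemma le_cnt (p : ℕ → Bool) : ∀ k l, l ≤ k → (∀ n, n < l → p n = true) → l ≤ cnt p k := by
  intro k
  induction k with
  | zero => intro l hl _; omega
  | succ k ih =>
    intro l hl hp
    by_cases h' : l ≤ k
    · exact (ih l h' hp).trans (cnt_mono p (Nat.le_succ k))
    · have hl' : l = k + 1 := by omega
      subst hl'
      have h1 : cnt p k = k := le_antisymm (cnt_le p k) (ih k le_rfl fun n hn => hp n (by omega))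
      have h2 : p k = true := hp k (by omega)
      simp [cnt, h1, h2]

lemma map_range_prefix {α : Type*} (f g : ℕ → α) {a b : ℕ} (hab : a ≤ b)
    (h : ∀ n < a, f n = g n) : (List.range a).map f <+: (List.range b).map g := by
  have : (List.range a).map f = (((List.range b).map g).take a) := by
    rw [← List.map_take, List.take_range, Nat.min_eq_left hab]
    exact List.map_congr_left (fun n hn => h n (List.mem_range.mp hn))
  rw [this]
  exact List.take_prefix _ _

lemma pref_eq_map (p : ℕ → ℕ) (m : ℕ) : pref p m = (List.range m).map p := by
  apply List.ext_getElem
  · simp [pref]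
  · intro n h1 h2
    simp [pref]

lemma pref_length (p : ℕ → ℕ) (m : ℕ) : (pref p m).length = m := by simp [pref]

lemma pref_prefix (p : ℕ → ℕ) {m m' : ℕ} (h : m ≤ m') : pref p m <+: pref p m' := by
  rw [pref_eq_map, pref_eq_map]
  exact map_range_prefix p p h (fun _ _ => rfl)

lemma map_range_getD {f : ℕ → ℕ} {m n : ℕ} (h : n < m) :
    ((List.range m).map f).getD n 0 = f n := by
  rw [List.getD_eq_getElem _ _ (by simpa using h)]
  simp

lemma pref_getD {p : ℕ → ℕ} {m n : ℕ} (h : n < m) : (pref p m).getD n 0 = p n := by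
  rw [pref_eq_map]; exact map_range_getD h

lemma map_range_getElem? {α : Type*} {f : ℕ → α} {m n : ℕ} (h : n < m) :
    ((List.range m).map f)[n]? = some (f n) := by
  rw [List.getElem?_eq_getElem (by simpa using h)]
  simp

lemma pref_getElem? {p : ℕ → ℕ} {m n : ℕ} (h : n < m) : (pref p m)[n]? = some (p n) := by
  rw [pref_eq_map]; exact map_range_getElem? h

lemma prefix_getD {u v : List ℕ} (h : u <+: v) {n : ℕ} (hn : n < u.length) :
    v.getD n 0 = u.getD n 0 := by
  obtain ⟨t, rfl⟩ := h
  rw [List.getD_eq_getElem _ _ hn, List.getD_eq_getElem _ _ (by simp; omega)]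
  exact List.getElem_append_left hn

lemma prefix_getElem? {α : Type*} {u v : List α} (h : u <+: v) {n : ℕ} {a : α}
    (ha : u[n]? = some a) : v[n]? = some a := by
  obtain ⟨t, rfl⟩ := h
  have hn : n < u.length := by
    by_contra hc
    rw [List.getElem?_eq_none (by omega)] at ha
    simp at ha
  rw [List.getElem?_append, if_pos hn]
  exact ha

/-- The generic "apply `F` to each component extracted via `τ`" partial function. -/
def genParF (F : (ℕ → ℕ) →. (ℕ → ℕ)) (τ : ℕ → ℕ → ℕ) : (ℕ → ℕ) →. (ℕ → ℕ) :=
  fun p => Part.mk (∀ i : ℕ, (F (fun j => p (τ i j))).Dom)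
    (fun h m => (F (fun j => p (τ m.unpair.1 j))).get (h m.unpair.1) m.unpair.2)

/-- prefix of the `i`-th input component extractable from the input prefix `u`. -/
def compo (τ : ℕ → ℕ → ℕ) (u : List ℕ) (i : ℕ) : List ℕ :=
  (List.range (cnt (fun j => decide (τ i j < u.length)) u.length)).map
    (fun j => u.getD (τ i j) 0)

/-- candidate `n`-th output entry. -/
def ent (ψ₀ : List ℕ → List ℕ) (τ : ℕ → ℕ → ℕ) (u : List ℕ) (n : ℕ) : Option ℕ :=
  (ψ₀ (compo τ u n.unpair.1))[n.unpair.2]?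

def psi' (ψ₀ : List ℕ → List ℕ) (τ : ℕ → ℕ → ℕ) (u : List ℕ) : List ℕ :=
  (List.range (cnt (fun n => (ent ψ₀ τ u n).isSome) u.length)).map
    (fun n => (ent ψ₀ τ u n).getD 0)

section mono

variable {ψ₀ : List ℕ → List ℕ} {τ : ℕ → ℕ → ℕ}

lemma compo_prefix {u v : List ℕ} (h : u <+: v) (i : ℕ) :
    compo τ u i <+: compo τ v i := by
  set a := cnt (fun j => decide (τ i j < u.length)) u.length with ha
  have htu : ∀ n < a, τ i n < u.length := by
    intro n hn
    simpa using cnt_true _ _ _ hn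
  have hab : a ≤ cnt (fun j => decide (τ i j < v.length)) v.length := by
    apply le_cnt
    · exact (cnt_le _ _).trans h.length_le
    · intro n hn
      simpa using (htu n hn).trans_le h.length_le
  exact map_range_prefix _ _ hab (fun n hn => (prefix_getD h (htu n hn)).symm)

lemma ent_prefix (hm : ∀ u v : List ℕ, u <+: v → ψ₀ u <+: ψ₀ v)
    {u v : List ℕ} (h : u <+: v) {n : ℕ} {a : ℕ}
    (ha : ent ψ₀ τ u n = some a) : ent ψ₀ τ v n = some a :=
  prefix_getElem? (hm _ _ (compo_prefix h _)) ha

lemma psi'_prefix (hm : ∀ u v : List ℕ, u <+: v → ψ₀ u <+: ψ₀ v)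
    {u v : List ℕ} (h : u <+: v) : psi' ψ₀ τ u <+: psi' ψ₀ τ v := by
  set a := cnt (fun n => (ent ψ₀ τ u n).isSome) u.length with hadef
  have hsome : ∀ n < a, ∃ b, ent ψ₀ τ u n = some b := by
    intro n hn
    have := cnt_true _ _ _ hn
    exact Option.isSome_iff_exists.mp this
  have hab : a ≤ cnt (fun n => (ent ψ₀ τ v n).isSome) v.length := by
    apply le_cnt
    · exact (cnt_le _ _).trans h.length_le
    · intro n hn
      obtain ⟨b, hb⟩ := hsome n hn
      rw [ent_prefix hm h hb]; rfl
  apply map_range_prefix _ _ hab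
  intro n hn
  obtain ⟨b, hb⟩ := hsome n hn
  rw [hb, ent_prefix hm h hb]

end mono

section comp

lemma cnt_eq_rec (p : ℕ → Bool) (k : ℕ) :
    cnt p k = Nat.rec (motive := fun _ => ℕ) 0
      (fun y ih => cond (decide (ih = y) && p y) (y + 1) ih) k := by
  induction k with
  | zero => rfl
  | succ k ih =>
    simp only [cnt, ih]
    by_cases h1 : (Nat.rec (motive := fun _ => ℕ) 0
        (fun y ih => cond (decide (ih = y) && p y) (y + 1) ih) k) = k <;>
      by_cases h2 : p k = true <;>
        simp [h1, h2]

lemma cnt_computable {α : Type} [Primcodable α] {pr : α → ℕ → Bool}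
    (h : Computable₂ pr) : Computable₂ fun a k => cnt (pr a) k := by
  have hrec : Computable fun (x : α × ℕ) => Nat.rec (motive := fun _ => ℕ) 0
      (fun y ih => cond (decide (ih = y) && pr x.1 y) (y + 1) ih) x.2 := by
    apply Computable.nat_rec (f := fun (x : α × ℕ) => x.2)
      (g := fun (_ : α × ℕ) => (0 : ℕ))
      (h := fun (x : α × ℕ) (q : ℕ × ℕ) =>
        cond (decide (q.2 = q.1) && pr x.1 q.1) (q.1 + 1) q.2)
    · exact Computable.snd
    · exact Computable.const 0
    · apply Computable₂.mk
      apply Computable.cond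
      · have h2 : Computable fun (x : (α × ℕ) × ℕ × ℕ) => decide (x.2.2 = x.2.1) :=
          (Primrec.eq.comp (Primrec.snd.comp Primrec.snd)
            (Primrec.fst.comp Primrec.snd)).decide.to_comp
        have h3 : Computable fun (x : (α × ℕ) × ℕ × ℕ) => pr x.1.1 x.2.1 :=
          h.comp (Computable.fst.comp Computable.fst) (Computable.fst.comp Computable.snd)
        exact (Primrec.and.to_comp).comp h2 h3
      · exact (Primrec.succ.to_comp).comp (Computable.fst.comp Computable.snd)
      · exact Computable.snd.comp Computable.snd
  exact Computable₂.mk (hrec.of_eq fun x => (cnt_eq_rec (pr x.1) x.2).symm)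

lemma map_range_rec {α : Type} (f : ℕ → α) (n : ℕ) :
    (List.range n).map f = Nat.rec (motive := fun _ => List α) []
      (fun y ih => ih ++ [f y]) n := by
  induction n with
  | zero => rfl
  | succ n ih => rw [List.range_succ, List.map_append, ih]; rfl

lemma mapRange_computable {α : Type} [Primcodable α] {f : α → ℕ → ℕ}
    (hf : Computable₂ f) {g : α → ℕ} (hg : Computable g) :
    Computable fun a => (List.range (g a)).map (f a) := by
  have : Computable fun a => Nat.rec (motive := fun _ => List ℕ) []
      (fun y ih => ih ++ [f a y]) (g a) := by
    apply Computable.nat_rec hg (Computable.const ([] : List ℕ))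
      (h := fun (a : α) (q : ℕ × List ℕ) => q.2 ++ [f a q.1])
    exact Computable.list_append.comp (Computable.snd.comp Computable.snd)
      ((Computable.list_cons.comp (hf.comp Computable.fst
        (Computable.fst.comp Computable.snd)) (Computable.const [])))
  exact this.of_eq fun a => (map_range_rec (f a) (g a)).symm

lemma compo_computable {τ : ℕ → ℕ → ℕ} (hτ : Primrec₂ τ) :
    Computable₂ (compo τ) := by
  have hcnt : Computable₂ fun (x : List ℕ × ℕ) (k : ℕ) =>
      cnt (fun j => decide (τ x.2 j < x.1.length)) k := by
    apply cnt_computable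
    exact ((Primrec.nat_lt.comp (hτ.comp (Primrec.snd.comp Primrec.fst) Primrec.snd)
      (Primrec.list_length.comp (Primrec.fst.comp Primrec.fst))).decide.to_comp).to₂
  apply Computable₂.mk
  apply mapRange_computable (f := fun (x : List ℕ × ℕ) j => x.1.getD (τ x.2 j) 0)
  · exact ((Primrec.list_getD 0).comp (Primrec.fst.comp Primrec.fst)
      (hτ.comp (Primrec.snd.comp Primrec.fst) Primrec.snd)).to_comp.to₂
  · exact hcnt.comp Computable.id
      ((Primrec.list_length.comp Primrec.fst).to_comp)

lemma ent_computable {ψ₀ : List ℕ → List ℕ} (hψ : Computable ψ₀)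
    {τ : ℕ → ℕ → ℕ} (hτ : Primrec₂ τ) : Computable₂ (ent ψ₀ τ) := by
  have h1 : Computable fun (x : List ℕ × ℕ) => ψ₀ (compo τ x.1 x.2.unpair.1) :=
    hψ.comp ((compo_computable hτ).comp Computable.fst
      ((Primrec.fst.comp (Primrec.unpair.comp Primrec.snd)).to_comp))
  have h2 : Computable fun (x : List ℕ × ℕ) =>
      (ψ₀ (compo τ x.1 x.2.unpair.1))[x.2.unpair.2]? :=
    (Primrec.list_getElem?.to_comp).comp h1
      ((Primrec.snd.comp (Primrec.unpair.comp Primrec.snd)).to_comp)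
  apply Computable₂.mk
  exact h2.of_eq fun x => by simp [ent]

lemma psi'_computable {ψ₀ : List ℕ → List ℕ} (hψ : Computable ψ₀)
    {τ : ℕ → ℕ → ℕ} (hτ : Primrec₂ τ) : Computable (psi' ψ₀ τ) := by
  have hent := ent_computable hψ hτ
  apply mapRange_computable (f := fun u n => (ent ψ₀ τ u n).getD 0)
  · exact (Computable.option_getD (hent.comp Computable.fst Computable.snd)
      (Computable.const 0)).to₂
  · exact (cnt_computable (pr := fun (u : List ℕ) n => (ent ψ₀ τ u n).isSome)
      ((Primrec.option_isSome.to_comp).comp₂ hent)).comp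
        Computable.id (Primrec.list_length.to_comp)

end comp

theorem genParF_baireComputable {F : (ℕ → ℕ) →. (ℕ → ℕ)} {τ : ℕ → ℕ → ℕ}
    (hF : BaireComputable F) (hτ : Primrec₂ τ) : BaireComputable (genParF F τ) := by
  obtain ⟨ψ₀, hψc, hψm, hψa⟩ := hF
  refine ⟨psi' ψ₀ τ, psi'_computable hψc hτ, fun u v h => psi'_prefix hψm h, ?_⟩
  intro p q hq n
  obtain ⟨hd, he⟩ := Part.mem_mk_iff.mp hq
  -- key pointwise stabilization
  have key : ∀ n' : ℕ, ∃ m0, ∀ m, m0 ≤ m → ent ψ₀ τ (pref p m) n' = some (q n') := by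
    intro n'
    set i := n'.unpair.1
    set k := n'.unpair.2
    set c : ℕ → ℕ := fun j => p (τ i j) with hc
    have hqn' : q n' = (F c).get (hd i) k := by rw [← he]
    obtain ⟨l, hl⟩ := hψa c ((F c).get (hd i)) (Part.get_mem (hd i)) k
    refine ⟨l + (Finset.range l).sup (fun j => τ i j) + 1, fun m hm => ?_⟩
    have hcl : l ≤ cnt (fun j => decide (τ i j < (pref p m).length)) (pref p m).length := by
      rw [pref_length]
      apply le_cnt
      · omega
      · intro j hj
        have : τ i j ≤ (Finset.range l).sup (fun j => τ i j) :=
          Finset.le_sup (Finset.mem_range.mpr hj)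
        simpa using by omega
    have hcompo : compo τ (pref p m) i =
        pref c (cnt (fun j => decide (τ i j < (pref p m).length)) (pref p m).length) := by
      rw [pref_eq_map c]
      show (List.range _).map (fun j => (pref p m).getD (τ i j) 0) = _
      apply List.map_congr_left
      intro j hj
      have hj' := List.mem_range.mp hj
      have hlt : τ i j < m := by
        have := cnt_true _ _ _ hj'
        rw [pref_length] at this
        simpa using this
      rw [pref_getD hlt]
    have hpre : ψ₀ (pref c l) <+: ψ₀ (compo τ (pref p m) i) := by
      rw [hcompo]
      exact hψm _ _ (pref_prefix c hcl)
    have : ent ψ₀ τ (pref p m) n' = some ((F c).get (hd i) k) :=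
      prefix_getElem? hpre hl
    rw [this, hqn']
  choose m0f hm0f using key
  set M := (Finset.range (n + 1)).sup m0f + n + 1 with hM
  refine ⟨M, ?_⟩
  have hents : ∀ n' ≤ n, ent ψ₀ τ (pref p M) n' = some (q n') := by
    intro n' hn'
    apply hm0f
    have : m0f n' ≤ (Finset.range (n + 1)).sup m0f :=
      Finset.le_sup (Finset.mem_range.mpr (by omega))
    omega
  have hN : n + 1 ≤ cnt (fun n' => (ent ψ₀ τ (pref p M) n').isSome) (pref p M).length := by
    rw [pref_length]
    apply le_cnt
    · omega
    · intro n' hn'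
      rw [hents n' (by omega)]; rfl
  show ((List.range _).map _)[n]? = _
  rw [map_range_getElem? (by omega)]
  rw [hents n le_rfl]
  rfl



lemma id_baireComputable : BaireComputable (fun p : ℕ → ℕ => Part.some p) := by
  refine ⟨id, Computable.id, fun u v h => h, ?_⟩
  intro p q hq n
  rw [Part.mem_some_iff] at hq
  subst hq
  exact ⟨n + 1, pref_getElem? (Nat.lt_succ_self n)⟩

lemma genParF_mem_component {F : (ℕ → ℕ) →. (ℕ → ℕ)} {τ : ℕ → ℕ → ℕ} {p q : ℕ → ℕ}
    (hq : q ∈ genParF F τ p) (i : ℕ) :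
    (fun k => q (Nat.pair i k)) ∈ F (fun j => p (τ i j)) := by
  obtain ⟨hd, he⟩ := Part.mem_mk_iff.mp hq
  rw [← he]
  have : (fun k => (F fun j => p (τ (Nat.pair i k).unpair.1 j)).get
        (hd (Nat.pair i k).unpair.1) (Nat.pair i k).unpair.2)
      = (F fun j => p (τ i j)).get (hd i) := by
    funext k
    rw [show (Nat.pair i k).unpair = (i, k) from Nat.unpair_pair i k]
  rw [this]
  exact Part.get_mem (hd i)

lemma seqRep_mem {X : Type*} (δX : RepSp X) {r : ℕ → ℕ} {x : ℕ → X}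
    (h : ∀ i, x i ∈ δX.δ (proj r i)) : x ∈ (seqRep δX).δ r := by
  have hdom : ∀ i, ∃ y, y ∈ δX.δ (proj r i) := fun i => ⟨x i, h i⟩
  exact mem_part_mk hdom (funext fun i =>
    Part.mem_unique (Classical.choose_spec (hdom i)) (h i))

lemma seqRep_mem_elim {X : Type*} (δX : RepSp X) {r : ℕ → ℕ} {x : ℕ → X}
    (h : x ∈ (seqRep δX).δ r) : ∀ i, x i ∈ δX.δ (proj r i) := by
  obtain ⟨hd, he⟩ := Part.mem_mk_iff.mp h
  intro i
  rw [← he]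
  exact Classical.choose_spec (hd i)

lemma exists_can_realizer {Z W : Type*} (δZ : RepSp Z) (δW : RepSp W) (g : Z → Set W) :
    ∃ G : (ℕ → ℕ) →. (ℕ → ℕ), Realizes δZ δW g G ∧
      ∀ r, (G r).Dom → ∃ z, z ∈ δZ.δ r ∧ (g z).Nonempty := by
  refine ⟨fun r => Part.mk (∃ q, ∃ z, z ∈ δZ.δ r ∧ ∃ w ∈ δW.δ q, w ∈ g z)
      (fun h => Classical.choose h), ?_, ?_⟩
  · rintro r z hz ⟨w, hw⟩
    obtain ⟨qw, hqw⟩ := δW.surj w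
    have hdom : ∃ q, ∃ z', z' ∈ δZ.δ r ∧ ∃ w' ∈ δW.δ q, w' ∈ g z' := ⟨qw, z, hz, w, hqw, hw⟩
    refine ⟨Classical.choose hdom, mem_part_mk hdom rfl, ?_⟩
    obtain ⟨z', hz', w', hw', hwg⟩ := Classical.choose_spec hdom
    obtain rfl := Part.mem_unique hz hz'
    exact ⟨w', hw', hwg⟩
  · intro r h
    obtain ⟨z, hz, w, _, hwg⟩ := Classical.choose_spec h
    exact ⟨z, hz, ⟨w, hwg⟩⟩


end ParAux

set_option maxHeartbeats 1000000

/-- parallelization is a closure operator with respect to `≤_W`. -/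


theorem parallelization_closure_operator (X Y Z W : Type) (δX : RepSp X)
    (δY : RepSp Y) (δZ : RepSp Z) (δW : RepSp W) (f : X → Set Y) (g : Z → Set W) :
    WRed δX δY (seqRep δX) (seqRep δY) f (parallelProblem f) ∧
    WRed (seqRep (seqRep δX)) (seqRep (seqRep δY)) (seqRep δX) (seqRep δY)
      (parallelProblem (parallelProblem f)) (parallelProblem f) ∧
    (WRed δX δY δZ δW f g →
      WRed (seqRep δX) (seqRep δY) (seqRep δZ) (seqRep δW)
        (parallelProblem f) (parallelProblem g)) := by
  refine ⟨?_, ?_, ?_⟩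
  -- Part 1 : f ≤_W f̂
  · refine ⟨ParAux.genParF (fun p => Part.some p)
        (fun a k => 2 * Nat.pair 0 (Nat.pair a k) + 1),
      ParAux.genParF (fun p => Part.some p) (fun _ k => k),
      ParAux.genParF_baireComputable ParAux.id_baireComputable
        (Primrec.nat_double_succ.comp (Primrec₂.natPair.comp (Primrec.const 0)
          (Primrec₂.natPair.comp Primrec.fst Primrec.snd))),
      ParAux.genParF_baireComputable ParAux.id_baireComputable Primrec.snd, ?_⟩
    intro G hG P x hx hfx
    have hrK : (fun m : ℕ => P m.unpair.2) ∈
        ParAux.genParF (fun p => Part.some p) (fun _ k => k) P :=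
      mem_part_mk (fun _ => trivial) rfl
    have hxseq : (fun _ : ℕ => x) ∈ (seqRep δX).δ (fun m : ℕ => P m.unpair.2) := by
      apply ParAux.seqRep_mem
      intro i
      have hpr : proj (fun m : ℕ => P m.unpair.2) i = P := funext fun k => by
        simp [proj, Nat.unpair_pair]
      rw [hpr]; exact hx
    obtain ⟨y0, hy0⟩ := hfx
    obtain ⟨qn, hqmem, Yf, hYname, hYf⟩ := hG (fun m : ℕ => P m.unpair.2) (fun _ => x)
      hxseq ⟨fun _ => y0, fun _ => hy0⟩
    have hY0 : Yf 0 ∈ δY.δ (proj qn 0) := ParAux.seqRep_mem_elim δY hYname 0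
    have hout : (fun m : ℕ => (pairB P qn)
          (2 * Nat.pair 0 (Nat.pair m.unpair.1 m.unpair.2) + 1)) ∈
        ParAux.genParF (fun p => Part.some p)
          (fun a k => 2 * Nat.pair 0 (Nat.pair a k) + 1) (pairB P qn) :=
      mem_part_mk (fun _ => trivial) rfl
    have houtval : (fun m : ℕ => (pairB P qn)
        (2 * Nat.pair 0 (Nat.pair m.unpair.1 m.unpair.2) + 1)) = proj qn 0 := by
      funext m
      rw [show Nat.pair m.unpair.1 m.unpair.2 = m from Nat.pair_unpair m]
      have h1 : ¬((2 * Nat.pair 0 m + 1) % 2 = 0) := by omega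
      have h2 : (2 * Nat.pair 0 m + 1) / 2 = Nat.pair 0 m := by omega
      simp [pairB, proj, h1, h2]
    refine ⟨proj qn 0, ?_, Yf 0, hY0, hYf 0⟩
    rw [Part.mem_bind_iff]
    refine ⟨fun m : ℕ => P m.unpair.2, hrK, ?_⟩
    rw [Part.mem_bind_iff]
    refine ⟨qn, hqmem, ?_⟩
    rw [← houtval]
    exact hout
  -- Part 2 : (f̂)̂ ≤_W f̂
  · refine ⟨ParAux.genParF (fun p => Part.some p)
        (fun i m' => 2 * Nat.pair (Nat.pair i m'.unpair.1) m'.unpair.2 + 1),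
      ParAux.genParF (fun p => Part.some p)
        (fun a k => Nat.pair a.unpair.1 (Nat.pair a.unpair.2 k)),
      ParAux.genParF_baireComputable ParAux.id_baireComputable
        (Primrec.nat_double_succ.comp (Primrec₂.natPair.comp
          (Primrec₂.natPair.comp Primrec.fst
            (Primrec.fst.comp (Primrec.unpair.comp Primrec.snd)))
          (Primrec.snd.comp (Primrec.unpair.comp Primrec.snd)))),
      ParAux.genParF_baireComputable ParAux.id_baireComputable
        (Primrec₂.natPair.comp (Primrec.fst.comp (Primrec.unpair.comp Primrec.fst))
          (Primrec₂.natPair.comp (Primrec.snd.comp (Primrec.unpair.comp Primrec.fst))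
            Primrec.snd)), ?_⟩
    intro G hG P Xs hX hne
    have hXij : ∀ i j, Xs i j ∈ δX.δ (proj (proj P i) j) := by
      intro i j
      exact ParAux.seqRep_mem_elim δX (ParAux.seqRep_mem_elim (seqRep δX) hX i) j
    have hrK : (fun m : ℕ =>
          P (Nat.pair m.unpair.1.unpair.1 (Nat.pair m.unpair.1.unpair.2 m.unpair.2))) ∈
        ParAux.genParF (fun p => Part.some p)
          (fun a k => Nat.pair a.unpair.1 (Nat.pair a.unpair.2 k)) P :=
      mem_part_mk (fun _ => trivial) rfl
    have hprojr : ∀ a : ℕ, proj (fun m : ℕ =>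
          P (Nat.pair m.unpair.1.unpair.1 (Nat.pair m.unpair.1.unpair.2 m.unpair.2))) a
        = proj (proj P a.unpair.1) a.unpair.2 := by
      intro a
      funext k
      simp [proj, Nat.unpair_pair]
    have hX' : (fun a : ℕ => Xs a.unpair.1 a.unpair.2) ∈ (seqRep δX).δ
        (fun m : ℕ =>
          P (Nat.pair m.unpair.1.unpair.1 (Nat.pair m.unpair.1.unpair.2 m.unpair.2))) := by
      apply ParAux.seqRep_mem
      intro a
      rw [hprojr a]
      exact hXij a.unpair.1 a.unpair.2
    obtain ⟨Ys, hYs⟩ := hne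
    obtain ⟨qn, hqmem, Wf, hWname, hWf⟩ := hG _ (fun a : ℕ => Xs a.unpair.1 a.unpair.2)
      hX' ⟨fun a => Ys a.unpair.1 a.unpair.2, fun a => hYs a.unpair.1 a.unpair.2⟩
    have hWi : ∀ a, Wf a ∈ δY.δ (proj qn a) := ParAux.seqRep_mem_elim δY hWname
    have hout : (fun m : ℕ => (pairB P qn)
          (2 * Nat.pair (Nat.pair m.unpair.1 m.unpair.2.unpair.1) m.unpair.2.unpair.2 + 1)) ∈
        ParAux.genParF (fun p => Part.some p)
          (fun i m' => 2 * Nat.pair (Nat.pair i m'.unpair.1) m'.unpair.2 + 1) (pairB P qn) :=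
      mem_part_mk (fun _ => trivial) rfl
    have houtcomp : ∀ i j : ℕ, proj (proj (fun m : ℕ => (pairB P qn)
          (2 * Nat.pair (Nat.pair m.unpair.1 m.unpair.2.unpair.1) m.unpair.2.unpair.2 + 1)) i) j
        = proj qn (Nat.pair i j) := by
      intro i j
      funext k
      have h1 : ¬((2 * Nat.pair (Nat.pair i j) k + 1) % 2 = 0) := by omega
      have h2 : (2 * Nat.pair (Nat.pair i j) k + 1) / 2 = Nat.pair (Nat.pair i j) k := by omega
      simp [proj, Nat.unpair_pair, pairB, h1, h2]
    refine ⟨fun m : ℕ => (pairB P qn)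
        (2 * Nat.pair (Nat.pair m.unpair.1 m.unpair.2.unpair.1) m.unpair.2.unpair.2 + 1),
      ?_, fun i j => Wf (Nat.pair i j), ?_, ?_⟩
    · rw [Part.mem_bind_iff]
      refine ⟨_, hrK, ?_⟩
      rw [Part.mem_bind_iff]
      exact ⟨qn, hqmem, hout⟩
    · apply ParAux.seqRep_mem (seqRep δY)
      intro i
      apply ParAux.seqRep_mem δY
      intro j
      rw [houtcomp i j]
      exact hWi (Nat.pair i j)
    · intro i j
      have := hWf (Nat.pair i j)
      simpa [Nat.unpair_pair] using this
  -- Part 3 : monotonicity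
  · rintro ⟨H₀, K₀, hH₀, hK₀, hmain⟩
    obtain ⟨Gc, hGc, hGcd⟩ := ParAux.exists_can_realizer δZ δW g
    refine ⟨ParAux.genParF H₀ (fun i j => 2 * Nat.pair i (j / 2) + j % 2),
      ParAux.genParF K₀ (fun i j => Nat.pair i j),
      ParAux.genParF_baireComputable hH₀
        (Primrec.nat_add.comp
          (Primrec.nat_double.comp (Primrec₂.natPair.comp Primrec.fst
            (Primrec.nat_div.comp Primrec.snd (Primrec.const 2))))
          (Primrec.nat_mod.comp Primrec.snd (Primrec.const 2))),
      ParAux.genParF_baireComputable hK₀ Primrec₂.natPair, ?_⟩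
    intro G' hG' P Xs hX hne
    have hXi : ∀ i, Xs i ∈ δX.δ (proj P i) := ParAux.seqRep_mem_elim δX hX
    have hnei : ∀ i, (f (Xs i)).Nonempty := by
      obtain ⟨Y0, hY0⟩ := hne
      exact fun i => ⟨Y0 i, hY0 i⟩
    have stepA : ∀ i, ∃ r, r ∈ K₀ (proj P i) ∧ ∃ z, z ∈ δZ.δ r ∧ (g z).Nonempty := by
      intro i
      obtain ⟨qq, hqq, y, hy, hyf⟩ := hmain Gc hGc (proj P i) (Xs i) (hXi i) (hnei i)
      rw [Part.mem_bind_iff] at hqq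
      obtain ⟨rr, hrr, hq2⟩ := hqq
      rw [Part.mem_bind_iff] at hq2
      obtain ⟨qg, hqg, _⟩ := hq2
      exact ⟨rr, hrr, hGcd rr ((Part.dom_iff_mem).mpr ⟨qg, hqg⟩)⟩
    choose rsel hrsel zsel hz1 hz2 using stepA
    have hKdom : ∀ i, (K₀ (proj P i)).Dom :=
      fun i => Part.dom_iff_mem.mpr ⟨rsel i, hrsel i⟩
    have hr'mem : (fun m : ℕ => (K₀ (proj P m.unpair.1)).get (hKdom m.unpair.1) m.unpair.2) ∈
        ParAux.genParF K₀ (fun i j => Nat.pair i j) P :=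
      mem_part_mk hKdom rfl
    have hcompK : ∀ i, proj (fun m : ℕ =>
          (K₀ (proj P m.unpair.1)).get (hKdom m.unpair.1) m.unpair.2) i ∈ K₀ (proj P i) :=
      fun i => ParAux.genParF_mem_component hr'mem i
    have hreq : ∀ i, proj (fun m : ℕ =>
          (K₀ (proj P m.unpair.1)).get (hKdom m.unpair.1) m.unpair.2) i = rsel i :=
      fun i => Part.mem_unique (hcompK i) (hrsel i)
    have hZ : zsel ∈ (seqRep δZ).δ (fun m : ℕ =>
        (K₀ (proj P m.unpair.1)).get (hKdom m.unpair.1) m.unpair.2) := by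
      apply ParAux.seqRep_mem
      intro i
      rw [hreq i]
      exact hz1 i
    obtain ⟨qn, hqn, Wseq, hWname, hWf⟩ := hG' _ zsel hZ
      ⟨fun i => (hz2 i).some, fun i => (hz2 i).some_mem⟩
    have hWi : ∀ i, Wseq i ∈ δW.δ (proj qn i) := ParAux.seqRep_mem_elim δW hWname
    have stepD : ∀ i, ∃ t, t ∈ H₀ (pairB (proj P i) (proj qn i)) ∧
        ∃ y, y ∈ δY.δ t ∧ y ∈ f (Xs i) := by
      intro i
      have hGi : Realizes δZ δW g
          (fun r => if r = rsel i then Part.some (proj qn i) else Gc r) := by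
        rintro r z hz hgne
        by_cases hri : r = rsel i
        · subst hri
          refine ⟨proj qn i, by simp, Wseq i, hWi i, ?_⟩
          have hzz : z = zsel i := Part.mem_unique hz (hz1 i)
          rw [hzz]
          exact hWf i
        · obtain ⟨qq, hqq, w, hw, hwg⟩ := hGc r z hz hgne
          exact ⟨qq, by simp [hri]; exact hqq, w, hw, hwg⟩
      obtain ⟨t, ht, y, hy, hyf⟩ := hmain _ hGi (proj P i) (Xs i) (hXi i) (hnei i)
      rw [Part.mem_bind_iff] at ht
      obtain ⟨rr, hrr, ht2⟩ := ht
      have hrr' : rr = rsel i := Part.mem_unique hrr (hrsel i)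
      subst hrr'
      rw [Part.mem_bind_iff] at ht2
      obtain ⟨qq, hqq, ht3⟩ := ht2
      have hqq' : qq = proj qn i := by simpa using hqq
      subst hqq'
      exact ⟨t, ht3, y, hy, hyf⟩
    choose tsel ht1 ysel hy1 hy2 using stepD
    have hcompB : ∀ i, (fun j => (pairB P qn) (2 * Nat.pair i (j / 2) + j % 2))
        = pairB (proj P i) (proj qn i) := by
      intro i
      funext j
      by_cases hj : j % 2 = 0
      · rw [hj]
        have h1 : (2 * Nat.pair i (j / 2) + 0) % 2 = 0 := by omega
        have h2 : (2 * Nat.pair i (j / 2) + 0) / 2 = Nat.pair i (j / 2) := by omega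
        simp [pairB, proj, h1, h2, hj]
      · have hj1 : j % 2 = 1 := by omega
        rw [hj1]
        have h1 : ¬((2 * Nat.pair i (j / 2) + 1) % 2 = 0) := by omega
        have h2 : (2 * Nat.pair i (j / 2) + 1) / 2 = Nat.pair i (j / 2) := by omega
        simp [pairB, proj, h1, h2, hj]
    have hHdom : ∀ i, (H₀ (fun j => (pairB P qn) (2 * Nat.pair i (j / 2) + j % 2))).Dom := by
      intro i
      rw [hcompB i]
      exact Part.dom_iff_mem.mpr ⟨tsel i, ht1 i⟩
    have houtmem : (fun m : ℕ =>
          (H₀ (fun j => (pairB P qn) (2 * Nat.pair m.unpair.1 (j / 2) + j % 2))).get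
            (hHdom m.unpair.1) m.unpair.2) ∈
        ParAux.genParF H₀ (fun i j => 2 * Nat.pair i (j / 2) + j % 2) (pairB P qn) :=
      mem_part_mk hHdom rfl
    have houtcomp : ∀ i, proj (fun m : ℕ =>
          (H₀ (fun j => (pairB P qn) (2 * Nat.pair m.unpair.1 (j / 2) + j % 2))).get
            (hHdom m.unpair.1) m.unpair.2) i ∈ H₀ (pairB (proj P i) (proj qn i)) := by
      intro i
      have := ParAux.genParF_mem_component houtmem i
      rwa [hcompB i] at this
    have houteq : ∀ i, proj (fun m : ℕ =>
          (H₀ (fun j => (pairB P qn) (2 * Nat.pair m.unpair.1 (j / 2) + j % 2))).get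
            (hHdom m.unpair.1) m.unpair.2) i = tsel i :=
      fun i => Part.mem_unique (houtcomp i) (ht1 i)
    refine ⟨(fun m : ℕ =>
        (H₀ (fun j => (pairB P qn) (2 * Nat.pair m.unpair.1 (j / 2) + j % 2))).get
          (hHdom m.unpair.1) m.unpair.2), ?_, ysel, ?_, fun i => hy2 i⟩
    · rw [Part.mem_bind_iff]
      refine ⟨_, hr'mem, ?_⟩
      rw [Part.mem_bind_iff]
      exact ⟨qn, hqn, houtmem⟩
    · apply ParAux.seqRep_mem
      intro i
      rw [houteq i]
      exact hy1 i
end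

section
/- Every fractal is countably irreducible: if f is a fractal and f ≤_W ⊔_{i∈ℕ} g_i for a sequence of problems (g_i), then f ≤_W g_i for some i. -/
open scoped Classical

namespace FCI

/-! ### prefix machinery -/

theorem pref_length (p : ℕ → ℕ) (m : ℕ) : (pref p m).length = m := by
  simp [pref]

theorem pref_getElem? (p : ℕ → ℕ) {m j : ℕ} (h : j < m) :
    (pref p m)[j]? = some (p j) := by
  rw [List.getElem?_eq_getElem (by simpa [pref_length] using h)]
  simp [pref]

theorem prefix_getElem? {u v : List ℕ} (h : u <+: v) {j : ℕ} {a : ℕ}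
    (hj : u[j]? = some a) : v[j]? = some a := by
  obtain ⟨t, rfl⟩ := h
  rwa [List.getElem?_append_left (List.getElem?_eq_some_iff.mp hj).1]

theorem prefix_of_getElem? {u v : List ℕ} (hlen : u.length ≤ v.length)
    (h : ∀ j, j < u.length → u[j]? = v[j]?) : u <+: v := by
  rw [List.prefix_iff_eq_take]
  apply List.ext_getElem?
  intro j
  rcases lt_or_ge j u.length with hj | hj
  · rw [h j hj, List.getElem?_take_of_lt hj]
  · rw [List.getElem?_eq_none hj, List.getElem?_take, if_neg (not_lt.mpr hj)]

theorem pref_prefix (p : ℕ → ℕ) {m m' : ℕ} (h : m ≤ m') : pref p m <+: pref p m' := by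
  apply prefix_of_getElem? (by simpa [pref_length] using h)
  intro j hj
  rw [pref_length] at hj
  rw [pref_getElem? p hj, pref_getElem? p (lt_of_lt_of_le hj h)]

def Mono (ψ : List ℕ → List ℕ) : Prop := ∀ u v : List ℕ, u <+: v → ψ u <+: ψ v

def LimAt (ψ : List ℕ → List ℕ) (p q : ℕ → ℕ) : Prop :=
  ∀ n, ∃ m, (ψ (pref p m))[n]? = some (q n)

theorem limAt_agree {ψ : List ℕ → List ℕ} {p q : ℕ → ℕ} (hm : Mono ψ) (hl : LimAt ψ p q)
    {m j a : ℕ} (hja : (ψ (pref p m))[j]? = some a) : a = q j := by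
  obtain ⟨m', hm'⟩ := hl j
  rcases le_total m m' with h | h
  · have := prefix_getElem? (hm _ _ (pref_prefix p h)) hja
    rw [this] at hm'; exact Option.some.inj hm'
  · have := prefix_getElem? (hm _ _ (pref_prefix p h)) hm'
    rw [this] at hja; exact (Option.some.inj hja).symm

theorem limAt_reach {ψ : List ℕ → List ℕ} {p q : ℕ → ℕ} (hm : Mono ψ) (hl : LimAt ψ p q)
    (N : ℕ) : ∃ m, pref q N <+: ψ (pref p m) := by
  rcases Nat.eq_zero_or_pos N with rfl | hN
  · exact ⟨0, by simp [pref]⟩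
  · obtain ⟨m, hmm⟩ := hl (N - 1)
    refine ⟨m, ?_⟩
    have hlen : N ≤ (ψ (pref p m)).length := by
      have := (List.getElem?_eq_some_iff.mp hmm).1
      omega
    apply prefix_of_getElem? (by simpa [pref_length] using hlen)
    intro j hj
    rw [pref_length] at hj
    have hjlen : j < (ψ (pref p m)).length := lt_of_lt_of_le hj hlen
    rw [pref_getElem? q hj, List.getElem?_eq_getElem hjlen]
    congr 1
    exact (limAt_agree hm hl (List.getElem?_eq_getElem hjlen)).symm

theorem limAt_comp {ψ1 ψ2 : List ℕ → List ℕ} {p q t : ℕ → ℕ}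
    (h1 : Mono ψ1) (l1 : LimAt ψ1 p q) (h2 : Mono ψ2) (l2 : LimAt ψ2 q t) :
    LimAt (fun u => ψ2 (ψ1 u)) p t := by
  intro n
  obtain ⟨m', h'⟩ := l2 n
  obtain ⟨m, hmm⟩ := limAt_reach h1 l1 m'
  exact ⟨m, prefix_getElem? (h2 _ _ hmm) h'⟩

theorem mono_comp {ψ1 ψ2 : List ℕ → List ℕ} (h1 : Mono ψ1) (h2 : Mono ψ2) :
    Mono (fun u => ψ2 (ψ1 u)) := fun u v h => h2 _ _ (h1 _ _ h)

end FCI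
namespace FCI

/-! ### interleaved pairing on words -/

def listPair (a b : List ℕ) : List ℕ :=
  (List.range (min (2 * a.length) (2 * b.length + 1))).map
    (fun k => if k % 2 = 0 then a.getD (k / 2) 0 else b.getD (k / 2) 0)

theorem listPair_getElem? (a b : List ℕ) (n : ℕ) :
    (listPair a b)[n]? = if n < min (2 * a.length) (2 * b.length + 1)
      then some (if n % 2 = 0 then a.getD (n / 2) 0 else b.getD (n / 2) 0) else none := by
  by_cases h : n < min (2 * a.length) (2 * b.length + 1)
  · rw [if_pos h, listPair, List.getElem?_map, List.getElem?_range h]; rfl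
  · rw [if_neg h]
    apply List.getElem?_eq_none
    simp only [listPair, List.length_map, List.length_range]
    omega

theorem pref_getD (q : ℕ → ℕ) {N k : ℕ} (h : k < N) : (pref q N).getD k 0 = q k := by
  rw [List.getD_eq_getElem?_getD, pref_getElem? q h]; rfl

theorem getD_eq_of_prefix {a a' : List ℕ} (h : a <+: a') {k : ℕ} (hk : k < a.length) :
    a'.getD k 0 = a.getD k 0 := by
  rw [List.getD_eq_getElem?_getD, List.getD_eq_getElem?_getD,
    prefix_getElem? h (List.getElem?_eq_getElem hk)]
  simp [List.getElem?_eq_getElem hk]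

theorem listPair_mono {a a' b b' : List ℕ} (ha : a <+: a') (hb : b <+: b') :
    listPair a b <+: listPair a' b' := by
  have hla := ha.length_le
  have hlb := hb.length_le
  apply prefix_of_getElem?
  · simp only [listPair, List.length_map, List.length_range]
    omega
  · intro j hj
    simp only [listPair, List.length_map, List.length_range] at hj
    have hj' : j < min (2 * a'.length) (2 * b'.length + 1) := by omega
    rw [listPair_getElem?, listPair_getElem?, if_pos hj, if_pos hj']
    by_cases hj2 : j % 2 = 0
    · rw [if_pos hj2, if_pos hj2, getD_eq_of_prefix ha (by omega)]
    · rw [if_neg hj2, if_neg hj2, getD_eq_of_prefix hb (by omega)]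

theorem listPair_primrec : Primrec₂ listPair := by
  have hlen : Primrec (fun ab : List ℕ × List ℕ =>
      min (2 * ab.1.length) (2 * ab.2.length + 1)) :=
    Primrec₂.comp Primrec.nat_min
      (Primrec.nat_double.comp (Primrec.list_length.comp Primrec.fst))
      (Primrec.nat_double_succ.comp (Primrec.list_length.comp Primrec.snd))
  have hdiv : Primrec (fun x : (List ℕ × List ℕ) × ℕ => x.2 / 2) :=
    Primrec₂.comp Primrec.nat_div Primrec.snd (Primrec.const 2)
  have hbr1 : Primrec (fun x : (List ℕ × List ℕ) × ℕ => x.1.1.getD (x.2 / 2) 0) :=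
    (Primrec₂.comp Primrec.option_getD
      (Primrec₂.comp Primrec.list_getElem? (Primrec.fst.comp Primrec.fst) hdiv)
      (Primrec.const 0)).of_eq (fun x => List.getD_eq_getElem?_getD.symm)
  have hbr2 : Primrec (fun x : (List ℕ × List ℕ) × ℕ => x.1.2.getD (x.2 / 2) 0) :=
    (Primrec₂.comp Primrec.option_getD
      (Primrec₂.comp Primrec.list_getElem? (Primrec.snd.comp Primrec.fst) hdiv)
      (Primrec.const 0)).of_eq (fun x => List.getD_eq_getElem?_getD.symm)
  have hg : Primrec₂ (fun (ab : List ℕ × List ℕ) (k : ℕ) =>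
      if k % 2 = 0 then ab.1.getD (k / 2) 0 else ab.2.getD (k / 2) 0) :=
    Primrec.ite
      (PrimrecRel.comp Primrec.eq
        (Primrec₂.comp Primrec.nat_mod Primrec.snd (Primrec.const 2)) (Primrec.const 0))
      hbr1 hbr2
  exact Primrec.list_map (Primrec.list_range.comp hlen) hg

/-! ### tracked total maps -/

def Tracks (ψ : List ℕ → List ℕ) (Φ : (ℕ → ℕ) → (ℕ → ℕ)) : Prop :=
  Computable ψ ∧ Mono ψ ∧ ∀ p, LimAt ψ p (Φ p)

theorem mono_pair {ψa ψb : List ℕ → List ℕ} (ha : Mono ψa) (hb : Mono ψb) :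
    Mono (fun u => listPair (ψa u) (ψb u)) :=
  fun _ _ h => listPair_mono (ha _ _ h) (hb _ _ h)

theorem limAt_pair {ψa ψb : List ℕ → List ℕ} {p qa qb : ℕ → ℕ}
    (ha : Mono ψa) (hb : Mono ψb) (la : LimAt ψa p qa) (lb : LimAt ψb p qb) :
    LimAt (fun u => listPair (ψa u) (ψb u)) p (pairB qa qb) := by
  intro n
  obtain ⟨m1, hm1⟩ := limAt_reach ha la (n + 1)
  obtain ⟨m2, hm2⟩ := limAt_reach hb lb (n + 1)
  refine ⟨max m1 m2, ?_⟩
  have ha' : pref qa (n + 1) <+: ψa (pref p (max m1 m2)) :=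
    hm1.trans (ha _ _ (pref_prefix p (le_max_left _ _)))
  have hb' : pref qb (n + 1) <+: ψb (pref p (max m1 m2)) :=
    hm2.trans (hb _ _ (pref_prefix p (le_max_right _ _)))
  have hla : n + 1 ≤ (ψa (pref p (max m1 m2))).length := by
    simpa [pref_length] using ha'.length_le
  have hlb : n + 1 ≤ (ψb (pref p (max m1 m2))).length := by
    simpa [pref_length] using hb'.length_le
  rw [listPair_getElem?, if_pos (by omega)]
  by_cases h2 : n % 2 = 0
  · rw [if_pos h2, getD_eq_of_prefix ha' (by rw [pref_length]; omega),
      pref_getD qa (by omega)]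
    simp [pairB, h2]
  · rw [if_neg h2, getD_eq_of_prefix hb' (by rw [pref_length]; omega),
      pref_getD qb (by omega)]
    simp [pairB, h2]

theorem tracks_comp {ψ1 ψ2 : List ℕ → List ℕ} {Φ1 Φ2 : (ℕ → ℕ) → (ℕ → ℕ)}
    (h1 : Tracks ψ1 Φ1) (h2 : Tracks ψ2 Φ2) :
    Tracks (fun u => ψ2 (ψ1 u)) (fun s => Φ2 (Φ1 s)) :=
  ⟨h2.1.comp h1.1, mono_comp h1.2.1 h2.2.1,
    fun p => limAt_comp h1.2.1 (h1.2.2 p) h2.2.1 (h2.2.2 (Φ1 p))⟩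

theorem tracks_pair {ψa ψb : List ℕ → List ℕ} {Φa Φb : (ℕ → ℕ) → (ℕ → ℕ)}
    (ha : Tracks ψa Φa) (hb : Tracks ψb Φb) :
    Tracks (fun u => listPair (ψa u) (ψb u)) (fun s => pairB (Φa s) (Φb s)) :=
  ⟨Computable₂.comp (Primrec₂.to_comp listPair_primrec) ha.1 hb.1, mono_pair ha.2.1 hb.2.1,
    fun p => limAt_pair ha.2.1 hb.2.1 (ha.2.2 p) (hb.2.2 p)⟩

end FCI
namespace FCI

/-! ### concrete tracked maps -/

theorem getElem?_range_map (L : ℕ) (f : ℕ → ℕ) (j : ℕ) :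
    ((List.range L).map f)[j]? = if j < L then some (f j) else none := by
  by_cases h : j < L
  · rw [if_pos h, List.getElem?_map, List.getElem?_range h]; rfl
  · rw [if_neg h]
    apply List.getElem?_eq_none
    simp only [List.length_map, List.length_range]
    omega

theorem tracks_id : Tracks (fun u => u) (fun p => p) := by
  refine ⟨Computable.id, fun u v h => h, fun p n => ⟨n + 1, ?_⟩⟩
  exact pref_getElem? p (Nat.lt_succ_self n)

def wEven (u : List ℕ) : List ℕ :=
  (List.range ((u.length + 1) / 2)).map (fun i => u.getD (2 * i) 0)

def wOdd (u : List ℕ) : List ℕ :=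
  (List.range (u.length / 2)).map (fun i => u.getD (2 * i + 1) 0)

theorem tracks_wEven : Tracks wEven evenPart := by
  refine ⟨?_, ?_, ?_⟩
  · apply Primrec.to_comp
    apply Primrec.list_map
      (Primrec.list_range.comp
        (Primrec₂.comp Primrec.nat_div (Primrec.succ.comp Primrec.list_length)
          (Primrec.const 2)))
    exact (Primrec₂.comp Primrec.option_getD
      (Primrec₂.comp Primrec.list_getElem? Primrec.fst
        (Primrec.nat_double.comp Primrec.snd))
      (Primrec.const 0)).of_eq (fun x => List.getD_eq_getElem?_getD.symm)
  · intro u v h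
    have hl := h.length_le
    apply prefix_of_getElem?
    · simp only [wEven, List.length_map, List.length_range]; omega
    · intro j hj
      simp only [wEven, List.length_map, List.length_range] at hj
      rw [wEven, wEven, getElem?_range_map, getElem?_range_map, if_pos hj,
        if_pos (by omega), getD_eq_of_prefix h (by omega)]
  · intro p n
    refine ⟨2 * n + 1, ?_⟩
    rw [wEven, getElem?_range_map, if_pos (by rw [pref_length]; omega),
      pref_getD p (by omega)]
    rfl

theorem tracks_wOdd : Tracks wOdd oddPart := by
  refine ⟨?_, ?_, ?_⟩
  · apply Primrec.to_comp
    apply Primrec.list_map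
      (Primrec.list_range.comp
        (Primrec₂.comp Primrec.nat_div Primrec.list_length (Primrec.const 2)))
    exact (Primrec₂.comp Primrec.option_getD
      (Primrec₂.comp Primrec.list_getElem? Primrec.fst
        (Primrec.nat_double_succ.comp Primrec.snd))
      (Primrec.const 0)).of_eq (fun x => List.getD_eq_getElem?_getD.symm)
  · intro u v h
    have hl := h.length_le
    apply prefix_of_getElem?
    · simp only [wOdd, List.length_map, List.length_range]; omega
    · intro j hj
      simp only [wOdd, List.length_map, List.length_range] at hj
      rw [wOdd, wOdd, getElem?_range_map, getElem?_range_map, if_pos hj,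
        if_pos (by omega), getD_eq_of_prefix h (by omega)]
  · intro p n
    refine ⟨2 * n + 2, ?_⟩
    rw [wOdd, getElem?_range_map, if_pos (by rw [pref_length]; omega),
      pref_getD p (by omega)]
    rfl

/-- prepend a fixed value -/
def consF (i : ℕ) (q : ℕ → ℕ) : ℕ → ℕ := fun n => Nat.casesOn n i (fun k => q k)

theorem tracks_cons (i : ℕ) : Tracks (fun u => i :: u) (consF i) := by
  refine ⟨Primrec.to_comp (Primrec₂.comp Primrec.list_cons (Primrec.const i) Primrec.id),
    fun u v h => List.cons_prefix_cons.mpr ⟨rfl, h⟩, fun p n => ?_⟩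
  cases n with
  | zero => exact ⟨0, rfl⟩
  | succ k => exact ⟨k + 1, by simpa [consF] using pref_getElem? p (Nat.lt_succ_self k)⟩

/-- drop the first value -/
def shiftF (q : ℕ → ℕ) : ℕ → ℕ := fun n => q (n + 1)

theorem tracks_tail : Tracks (fun u => u.tail) shiftF := by
  refine ⟨Primrec.to_comp Primrec.list_tail, fun u v h => ?_, fun p n => ?_⟩
  · obtain ⟨t, rfl⟩ := h
    cases u with
    | nil => simp
    | cons a u => exact ⟨t, by simp⟩
  · refine ⟨n + 2, ?_⟩
    rw [List.getElem?_tail]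
    exact pref_getElem? p (by omega)

theorem evenPart_pairB (p q : ℕ → ℕ) : evenPart (pairB p q) = p := by
  funext n
  have h1 : (2 * n) % 2 = 0 := by omega
  have h2 : (2 * n) / 2 = n := by omega
  simp [evenPart, pairB, h1, h2]

theorem oddPart_pairB (p q : ℕ → ℕ) : oddPart (pairB p q) = q := by
  funext n
  have h1 : ¬((2 * n + 1) % 2 = 0) := by omega
  have h2 : (2 * n + 1) / 2 = n := by omega
  simp [oddPart, pairB, h1, h2]

/-! ### BaireComputable combinators -/

theorem bc_some : BaireComputable (fun p => Part.some p) := by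
  refine ⟨fun u => u, tracks_id.1, tracks_id.2.1, fun p q hq n => ?_⟩
  obtain rfl := Part.mem_some_iff.mp hq
  exact tracks_id.2.2 q n

theorem bc_precomp {ψΦ : List ℕ → List ℕ} {Φ : (ℕ → ℕ) → (ℕ → ℕ)} (hΦ : Tracks ψΦ Φ)
    {H : (ℕ → ℕ) →. (ℕ → ℕ)} (hH : BaireComputable H) :
    BaireComputable (fun s => H (Φ s)) := by
  obtain ⟨ψ, hc, hm, hl⟩ := hH
  exact ⟨fun u => ψ (ψΦ u), hc.comp hΦ.1, mono_comp hΦ.2.1 hm,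
    fun s q hq => limAt_comp hΦ.2.1 (hΦ.2.2 s) hm (hl (Φ s) q hq)⟩

theorem bc_postmap {ψΦ : List ℕ → List ℕ} {Φ : (ℕ → ℕ) → (ℕ → ℕ)} (hΦ : Tracks ψΦ Φ)
    {K : (ℕ → ℕ) →. (ℕ → ℕ)} (hK : BaireComputable K) :
    BaireComputable (fun p => (K p).map Φ) := by
  obtain ⟨ψ, hc, hm, hl⟩ := hK
  refine ⟨fun u => ψΦ (ψ u), hΦ.1.comp hc, mono_comp hm hΦ.2.1, fun p q hq => ?_⟩
  obtain ⟨r, hr, rfl⟩ := (Part.mem_map_iff _).mp hq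
  exact limAt_comp hm (hl p r hr) hΦ.2.1 (hΦ.2.2 r)

theorem bc_bind {K1 K2 : (ℕ → ℕ) →. (ℕ → ℕ)} (h1 : BaireComputable K1)
    (h2 : BaireComputable K2) : BaireComputable (fun p => (K1 p).bind K2) := by
  obtain ⟨ψ1, hc1, hm1, hl1⟩ := h1
  obtain ⟨ψ2, hc2, hm2, hl2⟩ := h2
  refine ⟨fun u => ψ2 (ψ1 u), hc2.comp hc1, mono_comp hm1 hm2, fun p q hq => ?_⟩
  obtain ⟨r, hr, hq⟩ := Part.mem_bind_iff.mp hq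
  exact limAt_comp hm1 (hl1 p r hr) hm2 (hl2 r q hq)

end FCI
namespace FCI

theorem exists_realizer {Z W : Type*} (δZ : RepSp Z) (δW : RepSp W) (g : Z → Set W) :
    ∃ G : (ℕ → ℕ) →. (ℕ → ℕ), Realizes δZ δW g G := by
  classical
  refine ⟨fun r => Part.some (if h : ∃ q, ∃ y ∈ δW.δ q, ∃ z ∈ δZ.δ r, y ∈ g z
    then h.choose else fun _ => 0), ?_⟩
  intro r z hz hne
  obtain ⟨y, hy⟩ := hne
  obtain ⟨q, hq⟩ := δW.surj y
  have hex : ∃ q, ∃ y ∈ δW.δ q, ∃ z ∈ δZ.δ r, y ∈ g z := ⟨q, y, hq, z, hz, hy⟩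
  refine ⟨_, Part.mem_some _, ?_⟩
  rw [dif_pos hex]
  obtain ⟨y', hy', z', hz', hy'g⟩ := hex.choose_spec
  exact ⟨y', hy', Part.mem_unique hz' hz ▸ hy'g⟩

theorem WRed_trans {X Y Z W U V : Type*} {δX : RepSp X} {δY : RepSp Y} {δZ : RepSp Z}
    {δW : RepSp W} {δU : RepSp U} {δV : RepSp V}
    {f : X → Set Y} {g : Z → Set W} {h : U → Set V}
    (h1 : WRed δX δY δZ δW f g) (h2 : WRed δZ δW δU δV g h) : WRed δX δY δU δV f h := by
  obtain ⟨H1, K1, bH1, bK1, hp1⟩ := h1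
  obtain ⟨H2, K2, bH2, bK2, hp2⟩ := h2
  obtain ⟨ψH1, cH1, mH1, lH1⟩ := bH1
  obtain ⟨ψK1, cK1, mK1, lK1⟩ := bK1
  obtain ⟨ψH2, cH2, mH2, lH2⟩ := bH2
  refine ⟨fun s => (K1 (evenPart s)).bind fun r =>
      (H2 (pairB r (oddPart s))).bind fun t => H1 (pairB (evenPart s) t),
    fun p => (K1 p).bind K2, ?_, bc_bind ⟨ψK1, cK1, mK1, lK1⟩ bK2, ?_⟩
  · refine ⟨fun u => ψH1 (listPair (wEven u) (ψH2 (listPair (ψK1 (wEven u)) (wOdd u)))),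
      ?_, ?_, ?_⟩
    · exact cH1.comp (Computable₂.comp (Primrec₂.to_comp listPair_primrec) tracks_wEven.1
        (cH2.comp (Computable₂.comp (Primrec₂.to_comp listPair_primrec)
          (cK1.comp tracks_wEven.1) tracks_wOdd.1)))
    · exact mono_comp (mono_pair tracks_wEven.2.1
        (mono_comp (mono_pair (mono_comp tracks_wEven.2.1 mK1) tracks_wOdd.2.1) mH2)) mH1
    · intro s q hq
      obtain ⟨r, hr, hq⟩ := Part.mem_bind_iff.mp hq
      obtain ⟨t, ht, hq⟩ := Part.mem_bind_iff.mp hq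
      have A1 : LimAt (fun u => ψK1 (wEven u)) s r :=
        limAt_comp tracks_wEven.2.1 (tracks_wEven.2.2 s) mK1 (lK1 _ r hr)
      have A2 : LimAt (fun u => listPair (ψK1 (wEven u)) (wOdd u)) s (pairB r (oddPart s)) :=
        limAt_pair (mono_comp tracks_wEven.2.1 mK1) tracks_wOdd.2.1 A1 (tracks_wOdd.2.2 s)
      have A3 : LimAt (fun u => ψH2 (listPair (ψK1 (wEven u)) (wOdd u))) s t :=
        limAt_comp (mono_pair (mono_comp tracks_wEven.2.1 mK1) tracks_wOdd.2.1) A2 mH2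
          (lH2 _ t ht)
      have A4 : LimAt
          (fun u => listPair (wEven u) (ψH2 (listPair (ψK1 (wEven u)) (wOdd u)))) s
          (pairB (evenPart s) t) :=
        limAt_pair tracks_wEven.2.1
          (mono_comp (mono_pair (mono_comp tracks_wEven.2.1 mK1) tracks_wOdd.2.1) mH2)
          (tracks_wEven.2.2 s) A3
      exact limAt_comp
        (mono_pair tracks_wEven.2.1
          (mono_comp (mono_pair (mono_comp tracks_wEven.2.1 mK1) tracks_wOdd.2.1) mH2))
        A4 mH1 (lH1 _ q hq)
  · intro G hG
    intro p x hx hne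
    obtain ⟨qh, hqh, y, hy, hyf⟩ := hp1 _ (hp2 G hG) p x hx hne
    obtain ⟨r, hr, hqh⟩ := Part.mem_bind_iff.mp hqh
    obtain ⟨t, ht, hqh⟩ := Part.mem_bind_iff.mp hqh
    obtain ⟨s', hs', ht⟩ := Part.mem_bind_iff.mp ht
    obtain ⟨q1, hq1, ht⟩ := Part.mem_bind_iff.mp ht
    refine ⟨qh, ?_, y, hy, hyf⟩
    refine Part.mem_bind_iff.mpr ⟨s', Part.mem_bind_iff.mpr ⟨r, hr, hs'⟩, ?_⟩
    refine Part.mem_bind_iff.mpr ⟨q1, hq1, ?_⟩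
    simp only [evenPart_pairB, oddPart_pairB]
    exact Part.mem_bind_iff.mpr ⟨r, hr, Part.mem_bind_iff.mpr ⟨t, ht, hqh⟩⟩

end FCI

/-- every fractal is countably irreducible. -/
theorem fractal_countably_irreducible (X Y : Type) (δX : RepSp X) (δY : RepSp Y)
    (f : X → Set Y) (hf : Fractal δX δY f)
    (Z W : ℕ → Type) (δZ : ∀ i, RepSp (Z i)) (δW : ∀ i, RepSp (W i))
    (g : ∀ i, Z i → Set (W i))
    (h : WRed δX δY (csumRep δZ) (csumRep δW) f (csumProblem g)) :
    ∃ i, WRed δX δY (δZ i) (δW i) f (g i) := by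
  classical
  by_cases hdom : ∃ x : X, (f x).Nonempty
  · obtain ⟨F, ⟨hFf, hfF⟩, hfrac⟩ := hf
    obtain ⟨x₀, hfx₀⟩ := hdom
    obtain ⟨p₀, hp₀⟩ := δX.surj x₀
    -- the representative `F` has nonempty domain
    have hFdom : ∃ p, (F p).Nonempty := by
      by_contra hFe
      have hFe' : ∀ p, ¬(F p).Nonempty := fun p hp => hFe ⟨p, hp⟩
      obtain ⟨H₂, K₂, _, _, hprop⟩ := hfF
      have hGnone : Realizes repBaire repBaire F (fun _ => Part.none) :=
        fun p x _ hne => absurd hne (hFe' x)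
      obtain ⟨q, hq, -⟩ := hprop _ hGnone p₀ x₀ hp₀ hfx₀
      obtain ⟨r, -, hq⟩ := Part.mem_bind_iff.mp hq
      obtain ⟨t, ht, -⟩ := Part.mem_bind_iff.mp hq
      exact Part.notMem_none t ht
    obtain ⟨pstar, hpstar⟩ := hFdom
    -- `F` reduces to the countable coproduct
    have hFg : WRed repBaire repBaire (csumRep δZ) (csumRep δW) F (csumProblem g) :=
      FCI.WRed_trans hFf h
    obtain ⟨H', K', bH', bK', hprop'⟩ := hFg
    obtain ⟨ψK', cK', mK', lK'⟩ := bK'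
    obtain ⟨Gt, hGt⟩ := FCI.exists_realizer (csumRep δZ) (csumRep δW) (csumProblem g)
    obtain ⟨q0, hq0, -⟩ := hprop' Gt hGt pstar pstar (Part.mem_some _) hpstar
    obtain ⟨rstar, hrstar, -⟩ := Part.mem_bind_iff.mp hq0
    obtain ⟨i, hi⟩ : ∃ i, rstar 0 = i := ⟨_, rfl⟩
    obtain ⟨m₀, hm₀⟩ := lK' pstar rstar hrstar 0
    rw [hi] at hm₀
    refine ⟨i, ?_⟩
    -- the clopen cylinder around `pstar` on which the index is decided
    set A : Set (ℕ → ℕ) := ⋂ j ∈ Finset.range m₀, {p : ℕ → ℕ | p j = pstar j} with hA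
    have hmemA : ∀ p : ℕ → ℕ, p ∈ A ↔ ∀ j < m₀, p j = pstar j := by
      intro p
      simp [hA, Set.mem_iInter]
    have hclopen : IsClopen A := by
      apply isClopen_biInter_finset
      intro j _
      exact (isClopen_discrete {pstar j}).preimage (continuous_apply j)
    have hpA : pstar ∈ A := (hmemA pstar).mpr (fun j _ => rfl)
    have hprefA : ∀ p ∈ A, pref p m₀ = pref pstar m₀ := by
      intro p hp
      exact congrArg List.ofFn (funext fun j => (hmemA p).mp hp j.1 j.2)
    have hWE := hfrac A hclopen ⟨pstar, hpA, hpstar⟩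
    -- the restriction of `F` to `A` reduces to `g i`
    have hres : WRed repBaire repBaire (δZ i) (δW i) (restrictProblem F A) (g i) := by
      refine ⟨fun s => H' (pairB (evenPart s) (FCI.consF i (oddPart s))),
        fun p => (K' p).map FCI.shiftF,
        FCI.bc_precomp (FCI.tracks_pair FCI.tracks_wEven
          (FCI.tracks_comp FCI.tracks_wOdd (FCI.tracks_cons i))) bH',
        FCI.bc_postmap FCI.tracks_tail ⟨ψK', cK', mK', lK'⟩, ?_⟩
      intro Gi hGi
      set G : (ℕ → ℕ) →. (ℕ → ℕ) := fun r =>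
        if r 0 = i then (Gi (FCI.shiftF r)).map (FCI.consF i) else Gt r with hG
      have hGreal : Realizes (csumRep δZ) (csumRep δW) (csumProblem g) G := by
        intro r z hz hne
        by_cases h0 : r 0 = i
        · subst h0
          obtain ⟨z0, hz0, rfl⟩ := (Part.mem_map_iff _).mp hz
          obtain ⟨w, hw⟩ := hne
          obtain ⟨y0, hy0, rfl⟩ := hw
          obtain ⟨q', hq', y, hy, hyg⟩ := hGi _ z0 hz0 ⟨y0, hy0⟩
          refine ⟨FCI.consF (r 0) q', ?_, ⟨r 0, y⟩, ?_, ?_⟩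
          · simp only [hG, if_pos rfl]
            exact (Part.mem_map_iff _).mpr ⟨q', hq', rfl⟩
          · exact (Part.mem_map_iff _).mpr ⟨y, hy, rfl⟩
          · exact ⟨y, hyg, rfl⟩
        · obtain ⟨q', hq', rest⟩ := hGt r z hz hne
          refine ⟨q', ?_, rest⟩
          simp only [hG]
          rw [if_neg h0]
          exact hq'
      intro p x hx hne
      obtain rfl := Part.mem_some_iff.mp hx
      obtain ⟨q0', hq0F, hpA'⟩ := hne
      have hFne : (F x).Nonempty := ⟨q0', hq0F⟩
      obtain ⟨q, hq, y, hy, hyF⟩ := hprop' G hGreal x x (Part.mem_some _) hFne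
      obtain rfl := Part.mem_some_iff.mp hy
      obtain ⟨r, hr, hq⟩ := Part.mem_bind_iff.mp hq
      obtain ⟨q1, hq1, hq⟩ := Part.mem_bind_iff.mp hq
      have hr0 : r 0 = i := by
        have hpi : (ψK' (pref x m₀))[0]? = some i := by
          rw [hprefA x hpA']
          exact hm₀
        exact (FCI.limAt_agree mK' (lK' x r hr) hpi).symm
      simp only [hG] at hq1
      rw [if_pos hr0] at hq1
      obtain ⟨q', hq', rfl⟩ := (Part.mem_map_iff _).mp hq1
      refine ⟨y, ?_, y, Part.mem_some _, hyF, hpA'⟩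
      refine Part.mem_bind_iff.mpr ⟨FCI.shiftF r, (Part.mem_map_iff _).mpr ⟨r, hr, rfl⟩, ?_⟩
      refine Part.mem_bind_iff.mpr ⟨q', hq', ?_⟩
      simp only [FCI.evenPart_pairB, FCI.oddPart_pairB]
      exact hq
    exact FCI.WRed_trans (FCI.WRed_trans hfF hWE.2) hres
  · refine ⟨0, fun p => Part.some p, fun p => Part.some p, FCI.bc_some, FCI.bc_some, ?_⟩
    intro G _ p x _ hne
    exact absurd ⟨x, hne⟩ hdom
end

section
/- If f :⊆ X ⇉ Y is densely realized with Y having a total representation, and g :⊆ Z ⇉ ℕ satisfies g ≤_W f, then g is computable. -/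
open scoped Classical

namespace DRD

def takeP (u : List ℕ) (m : ℕ) : List ℕ := (List.range m).map fun i => u.getD i 0

def ilv (a b : List ℕ) : List ℕ :=
  (List.range (2 * min a.length b.length)).map fun i =>
    if i % 2 = 0 then a.getD (i / 2) 0 else b.getD (i / 2) 0

def cand (ψ : List ℕ → List ℕ) (u : List ℕ) (s : ℕ) : Option ℕ :=
  (ψ (ilv (takeP u s.unpair.1) (Denumerable.ofNat (List ℕ) s.unpair.2)))[0]?

def candP (ψ : List ℕ → List ℕ) (p : ℕ → ℕ) (s : ℕ) : Option ℕ :=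
  (ψ (ilv (pref p s.unpair.1) (Denumerable.ofNat (List ℕ) s.unpair.2)))[0]?

def searchAux (ψ : List ℕ → List ℕ) (u : List ℕ) : ℕ → Option ℕ
  | 0 => none
  | k + 1 => Option.casesOn (searchAux ψ u k) (cand ψ u k) some

def psiF (ψ : List ℕ → List ℕ) (u : List ℕ) : List ℕ :=
  Option.casesOn (searchAux ψ u u.length) [] (fun n => List.replicate u.length n)

@[simp] lemma pref_length (p : ℕ → ℕ) (m : ℕ) : (pref p m).length = m := by simp [pref]

@[simp] lemma takeP_length (u : List ℕ) (m : ℕ) : (takeP u m).length = m := by simp [takeP]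

lemma pref_getD (p : ℕ → ℕ) {k m : ℕ} (h : k < m) : (pref p m).getD k 0 = p k := by
  rw [List.getD_eq_getElem _ _ (by simpa using h)]
  simp [pref]

lemma pref_prefix (p : ℕ → ℕ) {m n : ℕ} (h : m ≤ n) : pref p m <+: pref p n := by
  obtain ⟨k, rfl⟩ := Nat.exists_eq_add_of_le h
  refine ⟨List.ofFn (fun j : Fin k => p (m + j)), ?_⟩
  rw [pref, pref, List.ofFn_add]
  rfl

lemma takeP_pref (p : ℕ → ℕ) {k m : ℕ} (h : k ≤ m) : takeP (pref p m) k = pref p k := by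
  apply List.ext_getElem (by simp)
  intro i h1 h2
  simp only [takeP_length] at h1
  simp only [takeP, List.getElem_map, List.getElem_range]
  rw [pref_getD p (by omega)]
  simp [pref]

lemma takeP_congr {u v : List ℕ} (h : u <+: v) {k : ℕ} (hk : k ≤ u.length) :
    takeP u k = takeP v k := by
  apply List.ext_getElem (by simp)
  intro i h1 h2
  simp only [takeP_length] at h1
  simp only [takeP, List.getElem_map, List.getElem_range]
  obtain ⟨t, rfl⟩ := h
  rw [List.getD_eq_getElem _ _ (by omega), List.getD_eq_getElem _ _ (by simp; omega)]
  rw [List.getElem_append_left (by omega)]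

lemma getElem?_of_prefix {u v : List ℕ} (h : u <+: v) {n a : ℕ} (ha : u[n]? = some a) :
    v[n]? = some a := by
  obtain ⟨t, rfl⟩ := h
  have hn : n < u.length := by
    by_contra hn
    rw [List.getElem?_eq_none (by omega)] at ha
    exact absurd ha (by simp)
  rw [List.getElem?_append_left hn]; exact ha

end DRD

namespace DRD

lemma cand_pref (ψ : List ℕ → List ℕ) (p : ℕ → ℕ) {s m : ℕ} (h : s < m) :
    cand ψ (pref p m) s = candP ψ p s := by
  unfold cand candP
  rw [takeP_pref p (le_trans (Nat.unpair_left_le s) (by omega))]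

lemma cand_congr (ψ : List ℕ → List ℕ) {u v : List ℕ} (h : u <+: v) {s : ℕ}
    (hs : s < u.length) : cand ψ u s = cand ψ v s := by
  unfold cand
  rw [takeP_congr h (le_trans (Nat.unpair_left_le s) (by omega))]

lemma searchAux_eq_none (ψ : List ℕ → List ℕ) (u : List ℕ) :
    ∀ k, (searchAux ψ u k = none ↔ ∀ s < k, cand ψ u s = none) := by
  intro k
  induction k with
  | zero => simp [searchAux]
  | succ k ih =>
    simp only [searchAux]
    cases h : searchAux ψ u k with
    | none =>
      simp only []
      constructor
      · intro hc s hs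
        rcases Nat.lt_succ_iff_lt_or_eq.mp hs with hs | rfl
        · exact (ih.mp h) s hs
        · exact hc
      · intro hall; exact hall k (Nat.lt_succ_self k)
    | some n =>
      simp only []
      constructor
      · intro hc; exact absurd hc (by simp)
      · intro hall
        have := (ih.mpr (fun s hs => hall s (Nat.lt_succ_of_lt hs)))
        rw [h] at this; exact absurd this (by simp)

lemma searchAux_eq_some (ψ : List ℕ → List ℕ) (u : List ℕ) {s₀ n : ℕ}
    (h0 : ∀ s < s₀, cand ψ u s = none) (h1 : cand ψ u s₀ = some n) :
    ∀ k, s₀ < k → searchAux ψ u k = some n := by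
  intro k
  induction k with
  | zero => omega
  | succ k ih =>
    intro hk
    rcases Nat.lt_succ_iff_lt_or_eq.mp hk with hk | rfl
    · rw [searchAux, ih hk]
    · rw [searchAux, (searchAux_eq_none ψ u s₀).mpr h0]
      exact h1

lemma searchAux_some_inv (ψ : List ℕ → List ℕ) (u : List ℕ) {n : ℕ} :
    ∀ k, searchAux ψ u k = some n →
      ∃ s₀ < k, (∀ s < s₀, cand ψ u s = none) ∧ cand ψ u s₀ = some n := by
  intro k
  induction k with
  | zero => intro h; exact absurd h (by simp [searchAux])
  | succ k ih =>
    intro h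
    rw [searchAux] at h
    cases hs : searchAux ψ u k with
    | none =>
      rw [hs] at h
      exact ⟨k, Nat.lt_succ_self k, (searchAux_eq_none ψ u k).mp hs, h⟩
    | some m =>
      rw [hs] at h
      obtain rfl : m = n := Option.some.inj h
      obtain ⟨s₀, hs₀, h0, h1⟩ := ih hs
      exact ⟨s₀, Nat.lt_succ_of_lt hs₀, h0, h1⟩

lemma psiF_mono (ψ : List ℕ → List ℕ) {u v : List ℕ} (h : u <+: v) :
    psiF ψ u <+: psiF ψ v := by
  cases hu : searchAux ψ u u.length with
  | none => simp [psiF, hu]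
  | some n =>
    obtain ⟨s₀, hs₀, h0, h1⟩ := searchAux_some_inv ψ u _ hu
    have hlen : u.length ≤ v.length := h.length_le
    have h0' : ∀ s < s₀, cand ψ v s = none := fun s hs => by
      rw [← cand_congr ψ h (by omega)]; exact h0 s hs
    have h1' : cand ψ v s₀ = some n := by
      rw [← cand_congr ψ h (by omega)]; exact h1
    have hv : searchAux ψ v v.length = some n :=
      searchAux_eq_some ψ v h0' h1' _ (by omega)
    simp only [psiF, hu, hv]
    refine ⟨List.replicate (v.length - u.length) n, ?_⟩
    rw [← List.replicate_add]
    congr 1; omega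

lemma psiF_conv (ψ : List ℕ → List ℕ) (p : ℕ → ℕ) {s₀ n : ℕ}
    (h0 : ∀ s < s₀, candP ψ p s = none) (h1 : candP ψ p s₀ = some n)
    {m : ℕ} (hm : s₀ < m) : psiF ψ (pref p m) = List.replicate m n := by
  have hs : searchAux ψ (pref p m) m = some n := by
    refine searchAux_eq_some ψ _ (fun s hs => ?_) ?_ m hm
    · rw [cand_pref ψ p (lt_trans hs hm)]; exact h0 s hs
    · rw [cand_pref ψ p hm]; exact h1
  simp only [psiF, pref_length, hs]

theorem psiF_computable {ψ : List ℕ → List ℕ} (hψ : Computable ψ) :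
    Computable (psiF ψ) := by
  have hgetD : Primrec₂ (fun (l : List ℕ) (n : ℕ) => l.getD n 0) := Primrec.list_getD 0
  have hilv : Primrec₂ ilv := by
    have hf : Primrec (fun a : List ℕ × List ℕ => List.range (2 * min a.1.length a.2.length)) :=
      Primrec.list_range.comp ((Primrec.nat_mul.comp (Primrec.const 2)
        (Primrec.nat_min.comp (Primrec.list_length.comp Primrec.fst)
          (Primrec.list_length.comp Primrec.snd))))
    have hg : Primrec₂ (fun (a : List ℕ × List ℕ) (i : ℕ) =>
        if i % 2 = 0 then a.1.getD (i / 2) 0 else a.2.getD (i / 2) 0) := by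
      refine Primrec.ite ?_ ?_ ?_
      · exact Primrec.eq.comp (Primrec.nat_mod.comp Primrec.snd (Primrec.const 2))
          (Primrec.const 0)
      · exact hgetD.comp (Primrec.fst.comp Primrec.fst)
          (Primrec.nat_div.comp Primrec.snd (Primrec.const 2))
      · exact hgetD.comp (Primrec.snd.comp Primrec.fst)
          (Primrec.nat_div.comp Primrec.snd (Primrec.const 2))
    exact (Primrec.list_map hf hg).to₂
  have htakeP : Primrec₂ takeP := by
    have : Primrec₂ (fun (u : List ℕ) (m : ℕ) => (List.range m).map fun i => u.getD i 0) :=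
      (Primrec.list_map (Primrec.list_range.comp Primrec.snd)
        (hgetD.comp (Primrec.fst.comp Primrec.fst) Primrec.snd).to₂).to₂
    exact this.of_eq fun u m => rfl
  have hinner : Primrec₂ (fun (u : List ℕ) (s : ℕ) =>
      ilv (takeP u s.unpair.1) (Denumerable.ofNat (List ℕ) s.unpair.2)) :=
    hilv.comp (htakeP.comp Primrec.fst
        (Primrec.fst.comp (Primrec.unpair.comp Primrec.snd)))
      ((Primrec.ofNat (List ℕ)).comp (Primrec.snd.comp (Primrec.unpair.comp Primrec.snd)))
  have hcand : Computable₂ (cand ψ) := by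
    have h1 : Computable (fun a : List ℕ × ℕ => ψ (ilv (takeP a.1 a.2.unpair.1)
        (Denumerable.ofNat (List ℕ) a.2.unpair.2))) := hψ.comp hinner.to_comp
    exact ((Primrec.list_getElem?.comp Primrec.id (Primrec.const 0)).to_comp.comp h1).of_eq
      fun a => rfl
  have hsearch : Computable (fun u : List ℕ => searchAux ψ u u.length) := by
    have := Computable.nat_rec (f := fun u : List ℕ => u.length)
      (g := fun _ : List ℕ => (none : Option ℕ))
      (h := fun (u : List ℕ) (x : ℕ × Option ℕ) => Option.casesOn x.2 (cand ψ u x.1) some)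
      Primrec.list_length.to_comp (Computable.const none)
      (Computable.option_casesOn (Computable.snd.comp Computable.snd)
        (hcand.comp Computable.fst (Computable.fst.comp Computable.snd))
        (Computable.option_some.comp Computable.snd).to₂).to₂
    refine this.of_eq fun u => ?_
    have : ∀ k, Nat.rec (motive := fun _ => Option ℕ) none
        (fun y IH => Option.casesOn IH (cand ψ u y) some) k = searchAux ψ u k := by
      intro k
      induction k with
      | zero => rfl
      | succ k ih => simp only [searchAux]; rw [← ih]
    exact this u.length
  have hrepl : Computable₂ (fun (u : List ℕ) (n : ℕ) => List.replicate u.length n) := by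
    have : Primrec (fun a : List ℕ × ℕ => (List.range a.1.length).map fun _ => a.2) :=
      Primrec.list_map (Primrec.list_range.comp (Primrec.list_length.comp Primrec.fst))
        (Primrec.snd.comp Primrec.fst).to₂
    exact (this.of_eq fun a => by simp [List.map_const]).to_comp
  exact (Computable.option_casesOn hsearch (Computable.const [])
    (hrepl.comp Computable.fst Computable.snd).to₂).of_eq fun u => rfl

end DRD

namespace DRD

@[simp] lemma ilv_length (a b : List ℕ) : (ilv a b).length = 2 * min a.length b.length := by
  simp [ilv]

lemma ilv_pref (p q : ℕ → ℕ) (m : ℕ) (w : List ℕ)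
    (hq : ∀ k < min m w.length, q k = w.getD k 0) :
    ilv (pref p m) w = pref (pairB p q) (2 * min m w.length) := by
  apply List.ext_getElem (by simp)
  intro i h1 h2
  have hi : i < 2 * min m w.length := by simpa using h1
  have hi2 : i / 2 < min m w.length := by omega
  simp only [ilv, List.getElem_map, List.getElem_range, pref_length]
  have : (pref (pairB p q) (2 * min m w.length))[i] = pairB p q i := by simp [pref]
  rw [this]
  unfold pairB
  by_cases hpar : i % 2 = 0
  · rw [if_pos hpar, if_pos hpar, pref_getD p (by omega)]
  · rw [if_neg hpar, if_neg hpar, hq (i / 2) hi2]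

lemma ilv_pref_pref (p q : ℕ → ℕ) (m : ℕ) :
    ilv (pref p m) (pref q m) = pref (pairB p q) (2 * m) := by
  have := ilv_pref p q m (pref q m) (fun k hk => (pref_getD q (by simpa using hk)).symm)
  simpa using this

lemma exists_dense_cyl {S : Set (ℕ → ℕ)} (hS : ∀ q : ℕ → ℕ, q ∈ closure S)
    (w : List ℕ) (t : ℕ) : ∃ q ∈ S, ∀ k < t, q k = w.getD k 0 := by
  set c : ℕ → ℕ := fun k => w.getD k 0 with hc
  set U : Set (ℕ → ℕ) := ⋂ k : Fin t, (fun q : ℕ → ℕ => q k) ⁻¹' {c k} with hU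
  have hopen : IsOpen U :=
    isOpen_iInter_of_finite fun k =>
      (continuous_apply (k : ℕ)).isOpen_preimage _ (isOpen_discrete _)
  have hcU : c ∈ U := by
    simp only [hU, Set.mem_iInter, Set.mem_preimage, Set.mem_singleton_iff]
    exact fun k => trivial
  obtain ⟨q, hqU, hqS⟩ := mem_closure_iff.mp (hS c) U hopen hcU
  refine ⟨q, hqS, fun k hk => ?_⟩
  have := Set.mem_iInter.mp hqU ⟨k, hk⟩
  simpa [hc] using this

end DRD


/-- problems with discrete output reducible to densely realized
problems with totally represented output are computable. -/
theorem densely_realized_discrete (X Y Z : Type) (δX : RepSp X) (δY : RepSp Y)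
    (δZ : RepSp Z) (f : X → Set Y) (g : Z → Set ℕ)
    (htot : ∀ p, (δY.δ p).Dom) (hdense : DenselyRealized δX δY f)
    (hred : WRed δZ repNat δX δY g f) :
    ComputableProblem δZ repNat g := by
  classical
  obtain ⟨H, K, hH, hK, hcomp⟩ := hred
  obtain ⟨ψ, hψc, hψm, hψconv⟩ := hH
  -- a canonical realizer `G₀` of `f`
  set G₀ : (ℕ → ℕ) →. (ℕ → ℕ) := fun r => Part.mk
      (∃ q', ∃ y ∈ δY.δ q', ∃ x ∈ δX.δ r, y ∈ f x) (fun h => Classical.choose h) with hG₀def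
  have hG₀ : Realizes δX δY f G₀ := by
    rintro r x hx ⟨y, hy⟩
    obtain ⟨q', hq'⟩ := δY.surj y
    have hdm : ∃ q', ∃ y ∈ δY.δ q', ∃ x ∈ δX.δ r, y ∈ f x := ⟨q', y, hq', x, hx, hy⟩
    refine ⟨Classical.choose hdm, mem_part_mk hdm rfl, ?_⟩
    obtain ⟨y', hy', x', hx', hy'f⟩ := Classical.choose_spec hdm
    exact ⟨y', hy', by rwa [Part.mem_unique hx' hx] at hy'f⟩
  refine ⟨fun p => Part.mk (∃ s, (DRD.candP ψ p s).isSome)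
    (fun h => fun _ => (DRD.candP ψ p (Nat.find h)).get (Nat.find_spec h)), ?_, ?_⟩
  · -- the realizer is computable
    refine ⟨DRD.psiF ψ, DRD.psiF_computable hψc, fun u v h => DRD.psiF_mono ψ h, ?_⟩
    intro p q hq n
    obtain ⟨hdom, he⟩ := Part.mem_mk_iff.mp hq
    set s₀ := Nat.find hdom with hs₀
    set n₀ := (DRD.candP ψ p s₀).get (Nat.find_spec hdom) with hn₀
    have h0 : ∀ s < s₀, DRD.candP ψ p s = none := fun s hs =>
      Option.not_isSome_iff_eq_none.mp (Nat.find_min hdom hs)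
    have h1 : DRD.candP ψ p s₀ = some n₀ := (Option.some_get _).symm
    refine ⟨max (s₀ + 1) (n + 1), ?_⟩
    rw [DRD.psiF_conv ψ p h0 h1 (by omega)]
    have hqn : q n = n₀ := by rw [← he]
    have hn : n < max (s₀ + 1) (n + 1) := by omega
    simp [List.getElem?_replicate, hn, hqn]
  · -- the realizer realizes `g`
    intro p z hz hnz
    obtain ⟨q₀', hq₀'mem, y₀, hy₀, hy₀g⟩ := hcomp G₀ hG₀ p z hz hnz
    rw [Part.mem_bind_iff] at hq₀'mem
    obtain ⟨r, hrK, hrest⟩ := hq₀'mem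
    rw [Part.mem_bind_iff] at hrest
    obtain ⟨q₀, hq₀G, hq₀'H⟩ := hrest
    -- key claim: every candidate value is a correct solution
    have key : ∀ s n₀, DRD.candP ψ p s = some n₀ → n₀ ∈ g z := by
      intro s n₀ hcand
      set m₀ := (Nat.unpair s).1 with hm₀
      set w := Denumerable.ofNat (List ℕ) (Nat.unpair s).2 with hw
      set t := min m₀ w.length with ht
      obtain ⟨qs, hqagree, hqsol⟩ :
          ∃ qs : ℕ → ℕ, (∀ k < t, qs k = w.getD k 0) ∧
            (∀ x, x ∈ δX.δ r → (f x).Nonempty → ∃ y ∈ δY.δ qs, y ∈ f x) := by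
        by_cases hx : ∃ x, x ∈ δX.δ r ∧ (f x).Nonempty
        · obtain ⟨x, hxr, hfx⟩ := hx
          have hcl : ∀ q : ℕ → ℕ, q ∈ closure {q | ∃ y ∈ δY.δ q, y ∈ f x} := fun q =>
            hdense r x hxr hfx (htot q)
          obtain ⟨qs, hqsS, hagr⟩ := DRD.exists_dense_cyl hcl w t
          refine ⟨qs, hagr, fun x' hx' _ => ?_⟩
          obtain ⟨y, hy, hyf⟩ := hqsS
          exact ⟨y, hy, by rwa [Part.mem_unique hx' hxr]⟩
        · exact ⟨fun k => w.getD k 0, fun k _ => rfl,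
            fun x hx' hfx' => absurd ⟨x, hx', hfx'⟩ hx⟩
      -- the adversarial realizer
      set Gs : (ℕ → ℕ) →. (ℕ → ℕ) :=
        (fun r' => if r' = r then Part.some qs else G₀ r') with hGsdef
      have hGs : Realizes δX δY f Gs := by
        intro r' x' hx' hfx'
        by_cases hr : r' = r
        · subst hr
          obtain ⟨y, hy, hyf⟩ := hqsol x' hx' hfx'
          exact ⟨qs, by rw [hGsdef]; simp, y, hy, hyf⟩
        · obtain ⟨qq, hqq, hrest'⟩ := hG₀ r' x' hx' hfx'
          refine ⟨qq, ?_, hrest'⟩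
          rw [hGsdef]; simpa [hr] using hqq
      obtain ⟨q'', hq''mem, y', hy', hy'g⟩ := hcomp Gs hGs p z hz hnz
      rw [Part.mem_bind_iff] at hq''mem
      obtain ⟨r₂, hr₂, hrest₂⟩ := hq''mem
      obtain rfl : r₂ = r := Part.mem_unique hr₂ hrK
      rw [Part.mem_bind_iff] at hrest₂
      obtain ⟨qq, hqq, hq''H⟩ := hrest₂
      have hqqeq : qq = qs := by
        rw [hGsdef] at hqq
        simpa using hqq
      subst hqqeq
      have hy'eq : y' = q'' 0 := Part.mem_some_iff.mp hy'
      obtain ⟨m'', hm''⟩ := hψconv (pairB p qq) q'' hq''H 0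
      have hilv : DRD.ilv (pref p m₀) w = pref (pairB p qq) (2 * t) :=
        DRD.ilv_pref p qq m₀ w hqagree
      rw [DRD.candP] at hcand
      rw [← hm₀, ← hw] at hcand
      rw [hilv] at hcand
      have e1 : (ψ (pref (pairB p qq) (max (2 * t) m'')))[0]? = some n₀ :=
        DRD.getElem?_of_prefix (hψm _ _ (DRD.pref_prefix _ (le_max_left _ _))) hcand
      have e2 : (ψ (pref (pairB p qq) (max (2 * t) m'')))[0]? = some (q'' 0) :=
        DRD.getElem?_of_prefix (hψm _ _ (DRD.pref_prefix _ (le_max_right _ _))) hm''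
      have hn₀ : n₀ = q'' 0 := by
        rw [e1] at e2; exact Option.some.inj e2
      rw [hn₀, ← hy'eq]
      exact hy'g
    -- the domain condition holds
    obtain ⟨m', hm'⟩ := hψconv (pairB p q₀) q₀' hq₀'H 0
    have hdom : ∃ s, (DRD.candP ψ p s).isSome := by
      refine ⟨Nat.pair m' (Encodable.encode (pref q₀ m')), ?_⟩
      have hcp : DRD.candP ψ p (Nat.pair m' (Encodable.encode (pref q₀ m'))) =
          (ψ (pref (pairB p q₀) (2 * m')))[0]? := by
        rw [DRD.candP]
        rw [Nat.unpair_pair, Denumerable.ofNat_encode, DRD.ilv_pref_pref]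
      rw [hcp, DRD.getElem?_of_prefix
        (hψm _ _ (DRD.pref_prefix _ (by omega : m' ≤ 2 * m'))) hm']
      rfl
    refine ⟨_, mem_part_mk hdom rfl, _, Part.mem_some _, ?_⟩
    exact key (Nat.find hdom) _ (Option.some_get (Nat.find_spec hdom)).symm
end
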